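/- arXiv:1902.07604 — 4 statements merged into one kernel-verified Lean document; each statement's English description precedes it below -/
import Mathlib

section
/- Let a be a nondecreasing weight on (0,∞) and let g, h be nonnegative measurable functions on (0,∞). Then ess sup_{x∈(0,∞)} [ (ess sup_{t∈(0,∞)} 𝒜(x,t)·g(t)) · (ess sup_{t∈(0,∞)} 𝒜(t,x)·h(t)) ] ≈ ess sup_{x∈(0,∞)} [ g(x) · ess sup_{t∈(x,∞)} h(t) ] + ess sup_{x∈(0,∞)} [ a(x)^{−1} g(x) · ess sup_{t∈(0,x)} a(t) h(t) ], with equivalence constants independent of a, g and h. -/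
open MeasureTheory ENNReal Set


namespace GluingAux

noncomputable def esl (f : ℝ → ℝ≥0∞) (s : Set ℝ) : ℝ≥0∞ := essSup f (volume.restrict s)

lemma esl_mono_set {f : ℝ → ℝ≥0∞} {s t : Set ℝ} (h : s ⊆ t) : esl f s ≤ esl f t :=
  essSup_mono_measure' (Measure.restrict_mono h le_rfl)

lemma ae_le_esl (f : ℝ → ℝ≥0∞) {s : Set ℝ} (hs : MeasurableSet s) :
    ∀ᵐ x ∂(volume : Measure ℝ), x ∈ s → f x ≤ esl f s :=
  (ae_restrict_iff' hs).mp (ae_le_essSup f)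

lemma esl_le {f : ℝ → ℝ≥0∞} {s : Set ℝ} {c : ℝ≥0∞} (hs : MeasurableSet s)
    (h : ∀ᵐ x ∂(volume : Measure ℝ), x ∈ s → f x ≤ c) : esl f s ≤ c :=
  essSup_le_of_ae_le c ((ae_restrict_iff' hs).mpr h)

lemma le_esl {f : ℝ → ℝ≥0∞} {s : Set ℝ} {c : ℝ≥0∞} (hs : MeasurableSet s)
    (h0 : volume s ≠ 0) (h : ∀ᵐ x ∂(volume : Measure ℝ), x ∈ s → c ≤ f x) : c ≤ esl f s := by
  have hc : c = essSup (fun _ => c) (volume.restrict s) :=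
    (essSup_const c (by simpa [Measure.restrict_eq_zero] using h0)).symm
  rw [hc]
  exact essSup_mono_ae ((ae_restrict_iff' hs).mpr h)

lemma esl_mono_fun {f g : ℝ → ℝ≥0∞} {s : Set ℝ} (hs : MeasurableSet s)
    (h : ∀ᵐ x ∂(volume : Measure ℝ), x ∈ s → f x ≤ g x) : esl f s ≤ esl g s :=
  essSup_mono_ae ((ae_restrict_iff' hs).mpr h)

lemma esl_const_mul {f : ℝ → ℝ≥0∞} {s : Set ℝ} {c : ℝ≥0∞} :
    esl (fun x => c * f x) s = c * esl f s := essSup_const_mul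

lemma esl_mul_const {f : ℝ → ℝ≥0∞} {s : Set ℝ} {c : ℝ≥0∞} :
    esl (fun x => f x * c) s = esl f s * c := by
  have : (fun x => f x * c) = fun x => c * f x := by funext x; ring
  rw [this, esl_const_mul, mul_comm]

lemma esl_union_le {f : ℝ → ℝ≥0∞} {s t : Set ℝ} (hs : MeasurableSet s) (ht : MeasurableSet t) :
    esl f (s ∪ t) ≤ esl f s ⊔ esl f t := by
  apply esl_le (hs.union ht)
  filter_upwards [ae_le_esl f hs, ae_le_esl f ht] with x h1 h2 hx
  rcases hx with hx | hx
  · exact (h1 hx).trans le_sup_left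
  · exact (h2 hx).trans le_sup_right

lemma esl_Ici_eq_Ioi {f : ℝ → ℝ≥0∞} (x : ℝ) : esl f (Ici x) = esl f (Ioi x) := by
  unfold esl
  rw [Measure.restrict_congr_set Ioi_ae_eq_Ici.symm]

lemma esl_le_iSup {f : ℝ → ℝ≥0∞} {s : Set ℝ} (hs : MeasurableSet s) (S : ℚ → Set ℝ)
    (hS : ∀ q, MeasurableSet (S q)) (p : ℚ → Prop)
    (hcov : ∀ x ∈ s, ∃ q, p q ∧ x ∈ S q) :
    esl f s ≤ ⨆ q : ℚ, ⨆ _ : p q, esl f (S q) := by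
  apply esl_le hs
  filter_upwards [ae_all_iff.mpr fun q : ℚ => ae_le_esl f (hS q)] with x hx hxs
  obtain ⟨q, hpq, hxq⟩ := hcov x hxs
  exact le_iSup₂_of_le q hpq (hx q hxq)

lemma half_le_div {u v : ℝ≥0∞} (hu0 : u ≠ 0) (hu : u ≠ ∞) (hvu : v ≤ u) :
    2⁻¹ ≤ u / (u + v) := by
  have h2 : u + v ≤ 2 * u := by rw [two_mul]; exact add_le_add_right hvu u
  have hd : u / (2 * u) = 2⁻¹ := by
    rw [div_eq_mul_inv, ENNReal.mul_inv (Or.inl (by norm_num)) (Or.inl (by norm_num)),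
      ← mul_assoc, mul_comm u 2⁻¹, mul_assoc, ENNReal.mul_inv_cancel hu0 hu, mul_one]
  calc 2⁻¹ = u / (2 * u) := hd.symm
    _ ≤ u / (u + v) := ENNReal.div_le_div_left h2 u

lemma inv_mul_le_div {u v : ℝ≥0∞} (hvu : v ≤ u) : 2⁻¹ * u⁻¹ * v ≤ v / (v + u) := by
  have h2 : v + u ≤ 2 * u := by rw [two_mul]; exact add_le_add_left hvu u
  calc 2⁻¹ * u⁻¹ * v = v / (2 * u) := by
        rw [div_eq_mul_inv, ENNReal.mul_inv (Or.inl (by norm_num)) (Or.inl (by norm_num))]; ring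
    _ ≤ v / (v + u) := ENNReal.div_le_div_left h2 v

lemma div_add_le_one {u v : ℝ≥0∞} : u / (u + v) ≤ 1 :=
  (ENNReal.div_le_div_right (self_le_add_right u v) _).trans ENNReal.div_self_le_one

lemma div_add_le_div {u v : ℝ≥0∞} : u / (u + v) ≤ u * v⁻¹ := by
  rw [← div_eq_mul_inv]
  exact ENNReal.div_le_div_left (self_le_add_left v u) u

noncomputable def Sf (a g : ℝ → ℝ≥0∞) (x : ℝ) : ℝ≥0∞ := esl (fun t => a x / (a x + a t) * g t) (Ioi 0)
noncomputable def Tf (a h : ℝ → ℝ≥0∞) (x : ℝ) : ℝ≥0∞ := esl (fun t => a t / (a t + a x) * h t) (Ioi 0)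

lemma h4inv : (4:ℝ≥0∞)⁻¹ = 2⁻¹ * 2⁻¹ := by
  rw [← ENNReal.mul_inv (Or.inl (by norm_num)) (Or.inl (by norm_num))]; norm_num

lemma four_inv_le {X A : ℝ≥0∞} (h : 4⁻¹ * X ≤ A) : X ≤ 4 * A := by
  calc X = 4 * (4⁻¹ * X) := by
        rw [← mul_assoc, ENNReal.mul_inv_cancel (by norm_num) (by norm_num), one_mul]
    _ ≤ 4 * A := mul_le_mul_right h 4

variable {a g h : ℝ → ℝ≥0∞}

lemma core1 (hmono : MonotoneOn a (Ioi 0))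
    (hae : ∀ᵐ x ∂(volume : Measure ℝ), x ∈ Ioi 0 → 0 < a x ∧ a x < ∞)
    {r q : ℝ} (hr : 0 < r) (hrq : r < q) :
    esl g (Ioo 0 r) * esl h (Ioi q) ≤ 4 * esl (fun x => Sf a g x * Tf a h x) (Ioi 0) := by
  set c := esl g (Ioo 0 r) with hc
  set d := esl h (Ioi q) with hd
  have key : ∀ᵐ x ∂(volume : Measure ℝ), x ∈ Ioo r q → 4⁻¹ * (c * d) ≤ Sf a g x * Tf a h x := by
    filter_upwards [hae] with x hax hx
    have hx0 : (0:ℝ) < x := hr.trans hx.1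
    obtain ⟨ha0, hatop⟩ := hax hx0
    have hS : 2⁻¹ * c ≤ Sf a g x := by
      rw [hc, ← esl_const_mul]
      refine le_trans (esl_mono_fun measurableSet_Ioo ?_)
        (esl_mono_set (fun t ht => ht.1 : Ioo (0:ℝ) r ⊆ Ioi 0))
      refine ae_of_all _ fun t ht => ?_
      exact mul_le_mul_left
        (half_le_div ha0.ne' hatop.ne (hmono ht.1 hx0 (ht.2.trans hx.1).le)) _
    have hT : 2⁻¹ * d ≤ Tf a h x := by
      rw [hd, ← esl_const_mul]
      refine le_trans (esl_mono_fun measurableSet_Ioi ?_)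
        (esl_mono_set (fun t ht => hx0.trans (hx.2.trans ht) : Ioi q ⊆ Ioi 0))
      filter_upwards [hae] with t hat ht
      have ht0 : (0:ℝ) < t := hx0.trans (hx.2.trans ht)
      obtain ⟨hat0, hattop⟩ := hat ht0
      exact mul_le_mul_left
        (half_le_div hat0.ne' hattop.ne (hmono hx0 ht0 (hx.2.trans ht).le)) _
    calc 4⁻¹ * (c * d) = (2⁻¹ * c) * (2⁻¹ * d) := by rw [h4inv]; ring
      _ ≤ Sf a g x * Tf a h x := mul_le_mul' hS hT
  apply four_inv_le
  refine le_trans (le_esl measurableSet_Ioo ?_ key) (esl_mono_set fun y hy => hr.trans hy.1)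
  rw [Real.volume_Ioo]
  simp only [ne_eq, ENNReal.ofReal_eq_zero, not_le]
  linarith

lemma lower1 (hmono : MonotoneOn a (Ioi 0))
    (hae : ∀ᵐ x ∂(volume : Measure ℝ), x ∈ Ioi 0 → 0 < a x ∧ a x < ∞) :
    esl (fun x => g x * esl h (Ioi x)) (Ioi 0)
      ≤ 4 * esl (fun x => Sf a g x * Tf a h x) (Ioi 0) := by
  set A := esl (fun x => Sf a g x * Tf a h x) (Ioi 0) with hA
  have step2 : ∀ q : ℚ, 0 < (q:ℝ) → esl g (Ioo 0 (q:ℝ)) * esl h (Ioi (q:ℝ)) ≤ 4 * A := by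
    intro q hq
    have hsup : esl g (Ioo 0 (q:ℝ)) ≤
        ⨆ r : ℚ, ⨆ _ : 0 < (r:ℝ) ∧ (r:ℝ) < (q:ℝ), esl g (Ioo 0 (r:ℝ)) := by
      refine esl_le_iSup measurableSet_Ioo _ (fun r => measurableSet_Ioo) _ fun t ht => ?_
      obtain ⟨r, hr1, hr2⟩ := exists_rat_btwn ht.2
      exact ⟨r, ⟨ht.1.trans hr1, hr2⟩, ht.1, hr1⟩
    calc esl g (Ioo 0 (q:ℝ)) * esl h (Ioi (q:ℝ))
        ≤ (⨆ r : ℚ, ⨆ _ : 0 < (r:ℝ) ∧ (r:ℝ) < (q:ℝ), esl g (Ioo 0 (r:ℝ))) * esl h (Ioi (q:ℝ)) :=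
          mul_le_mul_left hsup _
      _ = ⨆ r : ℚ, ⨆ _ : 0 < (r:ℝ) ∧ (r:ℝ) < (q:ℝ), esl g (Ioo 0 (r:ℝ)) * esl h (Ioi (q:ℝ)) := by
          simp_rw [ENNReal.iSup_mul]
      _ ≤ 4 * A := iSup₂_le fun r hr => core1 hmono hae hr.1 hr.2
  refine le_trans (esl_le measurableSet_Ioi ?_)
    (iSup₂_le fun (q : ℚ) (hq : 0 < (q:ℝ)) => step2 q hq)
  filter_upwards [ae_all_iff.mpr fun q : ℚ => ae_le_esl g (measurableSet_Ioo (a := (0:ℝ)) (b := (q:ℝ)))]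
    with x hx hx0
  have hsup : esl h (Ioi x) ≤ ⨆ q : ℚ, ⨆ _ : x < (q:ℝ), esl h (Ioi (q:ℝ)) := by
    refine esl_le_iSup measurableSet_Ioi _ (fun q => measurableSet_Ioi) _ fun t ht => ?_
    obtain ⟨r, hr1, hr2⟩ := exists_rat_btwn (mem_Ioi.mp ht)
    exact ⟨r, hr1, hr2⟩
  calc g x * esl h (Ioi x) ≤ g x * ⨆ q : ℚ, ⨆ _ : x < (q:ℝ), esl h (Ioi (q:ℝ)) :=
        mul_le_mul_right hsup _
    _ = ⨆ q : ℚ, ⨆ _ : x < (q:ℝ), g x * esl h (Ioi (q:ℝ)) := by simp_rw [ENNReal.mul_iSup]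
    _ ≤ ⨆ q : ℚ, ⨆ _ : 0 < (q:ℝ), esl g (Ioo 0 (q:ℝ)) * esl h (Ioi (q:ℝ)) := by
        refine iSup₂_le fun q hq => le_iSup₂_of_le q (hx0.trans hq) ?_
        exact mul_le_mul_left (hx q ⟨hx0, hq⟩) _


lemma core2 (hmono : MonotoneOn a (Ioi 0))
    (hae : ∀ᵐ x ∂(volume : Measure ℝ), x ∈ Ioi 0 → 0 < a x ∧ a x < ∞)
    {q p r : ℝ} (hq : 0 < q) (hqp : q < p) (hpr : p < r) :
    esl (fun x => (a x)⁻¹ * g x) (Ioo p r) * esl (fun t => a t * h t) (Ioo 0 q)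
      ≤ 4 * esl (fun x => Sf a g x * Tf a h x) (Ioi 0) := by
  set E := esl (fun x => (a x)⁻¹ * g x) (Ioo p r) with hE
  set Q := esl (fun t => a t * h t) (Ioo 0 q) with hQ
  have key : ∀ᵐ x ∂(volume : Measure ℝ), x ∈ Ioo q p → 4⁻¹ * (E * Q) ≤ Sf a g x * Tf a h x := by
    filter_upwards [hae] with x hax hx
    have hx0 : (0:ℝ) < x := hq.trans hx.1
    obtain ⟨ha0, hatop⟩ := hax hx0
    have hS : (2⁻¹ * a x) * E ≤ Sf a g x := by
      rw [hE, ← esl_const_mul]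
      refine le_trans (esl_mono_fun measurableSet_Ioo ?_)
        (esl_mono_set (fun t ht => (hx0.trans (hx.2.trans ht.1) : 0 < t) : Ioo p r ⊆ Ioi 0))
      refine ae_of_all _ fun t ht => ?_
      have haxt : a x ≤ a t := hmono hx0 (hx0.trans (hx.2.trans ht.1)) (hx.2.trans ht.1).le
      calc (2⁻¹ * a x) * ((a t)⁻¹ * g t) = (2⁻¹ * (a t)⁻¹ * a x) * g t := by ring
        _ ≤ (a x / (a x + a t)) * g t := mul_le_mul_left (inv_mul_le_div haxt) _
    have hT : (2⁻¹ * (a x)⁻¹) * Q ≤ Tf a h x := by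
      rw [hQ, ← esl_const_mul]
      refine le_trans (esl_mono_fun measurableSet_Ioo ?_)
        (esl_mono_set (fun t ht => ht.1 : Ioo (0:ℝ) q ⊆ Ioi 0))
      refine ae_of_all _ fun t ht => ?_
      have hatx : a t ≤ a x := hmono ht.1 hx0 (ht.2.trans hx.1).le
      calc (2⁻¹ * (a x)⁻¹) * (a t * h t) = (2⁻¹ * (a x)⁻¹ * a t) * h t := by ring
        _ ≤ (a t / (a t + a x)) * h t := mul_le_mul_left (inv_mul_le_div hatx) _
    have hone : a x * (a x)⁻¹ = 1 := ENNReal.mul_inv_cancel ha0.ne' hatop.ne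
    calc 4⁻¹ * (E * Q) = (2⁻¹ * 2⁻¹) * ((a x * (a x)⁻¹) * (E * Q)) := by
          rw [hone, h4inv]; ring
      _ = ((2⁻¹ * a x) * E) * ((2⁻¹ * (a x)⁻¹) * Q) := by ring
      _ ≤ Sf a g x * Tf a h x := mul_le_mul' hS hT
  apply four_inv_le
  refine le_trans (le_esl measurableSet_Ioo ?_ key) (esl_mono_set fun y hy => hq.trans hy.1)
  rw [Real.volume_Ioo]
  simp only [ne_eq, ENNReal.ofReal_eq_zero, not_le]
  linarith

lemma lower2 (hmono : MonotoneOn a (Ioi 0))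
    (hae : ∀ᵐ x ∂(volume : Measure ℝ), x ∈ Ioi 0 → 0 < a x ∧ a x < ∞) :
    esl (fun x => (a x)⁻¹ * g x * esl (fun t => a t * h t) (Ioo 0 x)) (Ioi 0)
      ≤ 4 * esl (fun x => Sf a g x * Tf a h x) (Ioi 0) := by
  set A := esl (fun x => Sf a g x * Tf a h x) (Ioi 0) with hA
  set Φ := fun x => (a x)⁻¹ * g x with hΦ
  have step2 : ∀ q : ℚ, 0 < (q:ℝ) →
      esl Φ (Ioi (q:ℝ)) * esl (fun t => a t * h t) (Ioo 0 (q:ℝ)) ≤ 4 * A := by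
    intro q hq
    have hsup1 : esl Φ (Ioi (q:ℝ)) ≤ ⨆ r : ℚ, ⨆ _ : (q:ℝ) < (r:ℝ), esl Φ (Ioo (q:ℝ) (r:ℝ)) := by
      refine esl_le_iSup measurableSet_Ioi _ (fun r => measurableSet_Ioo) _ fun t ht => ?_
      obtain ⟨r, hr1, hr2⟩ := exists_rat_btwn (lt_add_one t)
      exact ⟨r, ht.trans hr1, ht, hr1⟩
    calc esl Φ (Ioi (q:ℝ)) * esl (fun t => a t * h t) (Ioo 0 (q:ℝ))
        ≤ (⨆ r : ℚ, ⨆ _ : (q:ℝ) < (r:ℝ), esl Φ (Ioo (q:ℝ) (r:ℝ))) *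
            esl (fun t => a t * h t) (Ioo 0 (q:ℝ)) := mul_le_mul_left hsup1 _
      _ = ⨆ r : ℚ, ⨆ _ : (q:ℝ) < (r:ℝ), esl Φ (Ioo (q:ℝ) (r:ℝ)) *
            esl (fun t => a t * h t) (Ioo 0 (q:ℝ)) := by simp_rw [ENNReal.iSup_mul]
      _ ≤ 4 * A := by
          refine iSup₂_le fun r hr => ?_
          have hsup2 : esl Φ (Ioo (q:ℝ) (r:ℝ)) ≤
              ⨆ p : ℚ, ⨆ _ : (q:ℝ) < (p:ℝ) ∧ (p:ℝ) < (r:ℝ), esl Φ (Ioo (p:ℝ) (r:ℝ)) := by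
            refine esl_le_iSup measurableSet_Ioo _ (fun p => measurableSet_Ioo) _ fun t ht => ?_
            obtain ⟨p, hp1, hp2⟩ := exists_rat_btwn ht.1
            exact ⟨p, ⟨hp1, hp2.trans ht.2⟩, hp2, ht.2⟩
          calc esl Φ (Ioo (q:ℝ) (r:ℝ)) * esl (fun t => a t * h t) (Ioo 0 (q:ℝ))
              ≤ (⨆ p : ℚ, ⨆ _ : (q:ℝ) < (p:ℝ) ∧ (p:ℝ) < (r:ℝ), esl Φ (Ioo (p:ℝ) (r:ℝ))) *
                  esl (fun t => a t * h t) (Ioo 0 (q:ℝ)) := mul_le_mul_left hsup2 _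
            _ = ⨆ p : ℚ, ⨆ _ : (q:ℝ) < (p:ℝ) ∧ (p:ℝ) < (r:ℝ), esl Φ (Ioo (p:ℝ) (r:ℝ)) *
                  esl (fun t => a t * h t) (Ioo 0 (q:ℝ)) := by simp_rw [ENNReal.iSup_mul]
            _ ≤ 4 * A := iSup₂_le fun p hp => core2 hmono hae hq hp.1 hp.2
  refine le_trans (esl_le measurableSet_Ioi ?_)
    (iSup₂_le fun (q : ℚ) (hq : 0 < (q:ℝ)) => step2 q hq)
  filter_upwards [ae_all_iff.mpr fun q : ℚ => ae_le_esl Φ (measurableSet_Ioi (a := (q:ℝ)))]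
    with x hx hx0
  have hsup : esl (fun t => a t * h t) (Ioo 0 x) ≤
      ⨆ q : ℚ, ⨆ _ : 0 < (q:ℝ) ∧ (q:ℝ) < x, esl (fun t => a t * h t) (Ioo 0 (q:ℝ)) := by
    refine esl_le_iSup measurableSet_Ioo _ (fun q => measurableSet_Ioo) _ fun t ht => ?_
    obtain ⟨s, hs1, hs2⟩ := exists_rat_btwn ht.2
    exact ⟨s, ⟨ht.1.trans hs1, hs2⟩, ht.1, hs1⟩
  calc Φ x * esl (fun t => a t * h t) (Ioo 0 x)
      ≤ Φ x * ⨆ q : ℚ, ⨆ _ : 0 < (q:ℝ) ∧ (q:ℝ) < x, esl (fun t => a t * h t) (Ioo 0 (q:ℝ)) :=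
        mul_le_mul_right hsup _
    _ = ⨆ q : ℚ, ⨆ _ : 0 < (q:ℝ) ∧ (q:ℝ) < x, Φ x * esl (fun t => a t * h t) (Ioo 0 (q:ℝ)) := by
        simp_rw [ENNReal.mul_iSup]
    _ ≤ ⨆ q : ℚ, ⨆ _ : 0 < (q:ℝ), esl Φ (Ioi (q:ℝ)) * esl (fun t => a t * h t) (Ioo 0 (q:ℝ)) := by
        refine iSup₂_le fun q hq => le_iSup₂_of_le q hq.1 ?_
        exact mul_le_mul_left (hx q hq.2) _


lemma upper (hmono : MonotoneOn a (Ioi 0))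
    (hae : ∀ᵐ x ∂(volume : Measure ℝ), x ∈ Ioi 0 → 0 < a x ∧ a x < ∞) :
    esl (fun x => Sf a g x * Tf a h x) (Ioi 0) ≤
      4 * (esl (fun x => g x * esl h (Ioi x)) (Ioi 0)
        + esl (fun x => (a x)⁻¹ * g x * esl (fun t => a t * h t) (Ioo 0 x)) (Ioi 0)) := by
  set B1 := esl (fun x => g x * esl h (Ioi x)) (Ioi 0) with hB1
  set B2 := esl (fun x => (a x)⁻¹ * g x * esl (fun t => a t * h t) (Ioo 0 x)) (Ioi 0) with hB2
  have F1 : ∀ᵐ s ∂(volume : Measure ℝ), s ∈ Ioi (0:ℝ) → g s * esl h (Ioi s) ≤ B1 :=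
    ae_le_esl _ measurableSet_Ioi
  have F2 : ∀ᵐ s ∂(volume : Measure ℝ), s ∈ Ioi (0:ℝ) →
      (a s)⁻¹ * g s * esl (fun t => a t * h t) (Ioo 0 s) ≤ B2 :=
    ae_le_esl _ measurableSet_Ioi
  apply esl_le measurableSet_Ioi
  filter_upwards [hae] with x hax hx0
  obtain ⟨ha0, hatop⟩ := hax hx0
  set P1 := esl g (Ioo 0 x) with hP1
  set P2 := esl (fun t => (a t)⁻¹ * g t) (Ici x) with hP2
  set Q1 := esl h (Ici x) with hQ1
  set Q2 := esl (fun t => a t * h t) (Ioo 0 x) with hQ2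
  have hS : Sf a g x ≤ P1 + a x * P2 := by
    have b1 : esl (fun t => a x / (a x + a t) * g t) (Ioo 0 x) ≤ P1 := by
      refine esl_mono_fun measurableSet_Ioo (ae_of_all _ fun t _ => ?_)
      calc a x / (a x + a t) * g t ≤ 1 * g t := mul_le_mul_left div_add_le_one _
        _ = g t := one_mul _
    have b2 : esl (fun t => a x / (a x + a t) * g t) (Ici x) ≤ a x * P2 := by
      rw [hP2, ← esl_const_mul]
      refine esl_mono_fun measurableSet_Ici (ae_of_all _ fun t _ => ?_)
      calc a x / (a x + a t) * g t ≤ a x * (a t)⁻¹ * g t := mul_le_mul_left div_add_le_div _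
        _ = a x * ((a t)⁻¹ * g t) := by ring
    calc Sf a g x = esl (fun t => a x / (a x + a t) * g t) (Ioo 0 x ∪ Ici x) := by
          rw [Sf, Ioo_union_Ici_eq_Ioi hx0]
      _ ≤ esl (fun t => a x / (a x + a t) * g t) (Ioo 0 x)
            ⊔ esl (fun t => a x / (a x + a t) * g t) (Ici x) :=
          esl_union_le measurableSet_Ioo measurableSet_Ici
      _ ≤ P1 + a x * P2 := sup_le (b1.trans le_self_add) (b2.trans le_add_self)
  have hT : Tf a h x ≤ Q1 + (a x)⁻¹ * Q2 := by
    have b1 : esl (fun t => a t / (a t + a x) * h t) (Ici x) ≤ Q1 := by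
      refine esl_mono_fun measurableSet_Ici (ae_of_all _ fun t _ => ?_)
      calc a t / (a t + a x) * h t ≤ 1 * h t := mul_le_mul_left div_add_le_one _
        _ = h t := one_mul _
    have b2 : esl (fun t => a t / (a t + a x) * h t) (Ioo 0 x) ≤ (a x)⁻¹ * Q2 := by
      rw [hQ2, ← esl_const_mul]
      refine esl_mono_fun measurableSet_Ioo (ae_of_all _ fun t _ => ?_)
      calc a t / (a t + a x) * h t ≤ a t * (a x)⁻¹ * h t := mul_le_mul_left div_add_le_div _
        _ = (a x)⁻¹ * (a t * h t) := by ring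
    calc Tf a h x = esl (fun t => a t / (a t + a x) * h t) (Ioo 0 x ∪ Ici x) := by
          rw [Tf, Ioo_union_Ici_eq_Ioi hx0]
      _ ≤ esl (fun t => a t / (a t + a x) * h t) (Ioo 0 x)
            ⊔ esl (fun t => a t / (a t + a x) * h t) (Ici x) :=
          esl_union_le measurableSet_Ioo measurableSet_Ici
      _ ≤ Q1 + (a x)⁻¹ * Q2 := sup_le (b2.trans le_add_self) (b1.trans le_self_add)
  have C1 : P1 * Q1 ≤ B1 := by
    rw [hP1, ← esl_mul_const]
    refine esl_le measurableSet_Ioo ?_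
    filter_upwards [F1] with s hs1 hs
    calc g s * Q1 ≤ g s * esl h (Ioi s) :=
          mul_le_mul_right (esl_mono_set fun y hy => lt_of_lt_of_le hs.2 hy) _
      _ ≤ B1 := hs1 hs.1
  have C4 : P2 * Q2 ≤ B2 := by
    rw [hP2, ← esl_mul_const]
    refine esl_le measurableSet_Ici ?_
    filter_upwards [F2] with s hs2 hs
    calc (a s)⁻¹ * g s * Q2 ≤ (a s)⁻¹ * g s * esl (fun t => a t * h t) (Ioo 0 s) :=
          mul_le_mul_right (esl_mono_set (Ioo_subset_Ioo le_rfl hs)) _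
      _ ≤ B2 := hs2 (mem_Ioi.mpr (hx0.trans_le hs))
  have C2 : P1 * ((a x)⁻¹ * Q2) ≤ B1 + B2 := by
    have heq : P1 * ((a x)⁻¹ * Q2) = esl (fun s => g s * ((a x)⁻¹ * Q2)) (Ioo 0 x) :=
      esl_mul_const.symm
    rw [heq]
    refine esl_le measurableSet_Ioo ?_
    filter_upwards [F1, F2, hae] with s hs1 hs2 hsa hs
    have hs0 : (0:ℝ) < s := hs.1
    have hQsplit : Q2 ≤ esl (fun t => a t * h t) (Ioo 0 s) + esl (fun t => a t * h t) (Ico s x) := by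
      calc Q2 = esl (fun t => a t * h t) (Ioo 0 s ∪ Ico s x) := by
            rw [hQ2, Ioo_union_Ico_eq_Ioo hs.1 hs.2.le]
        _ ≤ _ := (esl_union_le measurableSet_Ioo measurableSet_Ico).trans
            (sup_le le_self_add le_add_self)
    have t1 : g s * ((a x)⁻¹ * esl (fun t => a t * h t) (Ioo 0 s)) ≤ B2 := by
      have hinv : (a x)⁻¹ ≤ (a s)⁻¹ := ENNReal.inv_le_inv.mpr (hmono hs0 hx0 hs.2.le)
      calc g s * ((a x)⁻¹ * esl (fun t => a t * h t) (Ioo 0 s))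
          ≤ g s * ((a s)⁻¹ * esl (fun t => a t * h t) (Ioo 0 s)) :=
            mul_le_mul_right (mul_le_mul_left hinv _) _
        _ = (a s)⁻¹ * g s * esl (fun t => a t * h t) (Ioo 0 s) := by ring
        _ ≤ B2 := hs2 hs0
    have t2 : g s * ((a x)⁻¹ * esl (fun t => a t * h t) (Ico s x)) ≤ B1 := by
      have hb : (a x)⁻¹ * esl (fun t => a t * h t) (Ico s x) ≤ esl h (Ioi s) := by
        rw [← esl_const_mul]
        calc esl (fun t => (a x)⁻¹ * (a t * h t)) (Ico s x) ≤ esl h (Ico s x) := by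
              refine esl_mono_fun measurableSet_Ico (ae_of_all _ fun t ht => ?_)
              have hat : a t ≤ a x := hmono (hs0.trans_le ht.1) hx0 ht.2.le
              calc (a x)⁻¹ * (a t * h t) = ((a x)⁻¹ * a t) * h t := by ring
                _ ≤ 1 * h t := mul_le_mul_left
                    ((mul_le_mul_right hat _).trans
                      (ENNReal.inv_mul_cancel ha0.ne' hatop.ne).le) _
                _ = h t := one_mul _
          _ ≤ esl h (Ici s) := esl_mono_set Ico_subset_Ici_self
          _ = esl h (Ioi s) := esl_Ici_eq_Ioi s
      calc g s * ((a x)⁻¹ * esl (fun t => a t * h t) (Ico s x)) ≤ g s * esl h (Ioi s) :=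
            mul_le_mul_right hb _
        _ ≤ B1 := hs1 hs0
    calc g s * ((a x)⁻¹ * Q2)
        ≤ g s * ((a x)⁻¹ * (esl (fun t => a t * h t) (Ioo 0 s)
            + esl (fun t => a t * h t) (Ico s x))) :=
          mul_le_mul_right (mul_le_mul_right hQsplit _) _
      _ = g s * ((a x)⁻¹ * esl (fun t => a t * h t) (Ioo 0 s))
            + g s * ((a x)⁻¹ * esl (fun t => a t * h t) (Ico s x)) := by ring
      _ ≤ B2 + B1 := add_le_add t1 t2
      _ = B1 + B2 := add_comm _ _
  have C3 : (a x * P2) * Q1 ≤ B1 + B2 := by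
    have heq : (a x * P2) * Q1 = esl (fun s => a x * ((a s)⁻¹ * g s) * Q1) (Ici x) := by
      rw [esl_mul_const, esl_const_mul]
    rw [heq]
    refine esl_le measurableSet_Ici ?_
    filter_upwards [F1, F2, hae] with s hs1 hs2 hsa hs
    have hs0 : (0:ℝ) < s := hx0.trans_le hs
    have hQ1split : Q1 ≤ esl h (Ico x s) + esl h (Ici s) := by
      calc Q1 = esl h (Ico x s ∪ Ici s) := by rw [hQ1, Ico_union_Ici_eq_Ici hs]
        _ ≤ _ := (esl_union_le measurableSet_Ico measurableSet_Ici).trans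
            (sup_le le_self_add le_add_self)
    have t1 : a x * ((a s)⁻¹ * g s) * esl h (Ico x s) ≤ B2 := by
      have hax : a x * esl h (Ico x s) ≤ esl (fun t => a t * h t) (Ioo 0 s) := by
        rw [← esl_const_mul]
        refine le_trans (esl_mono_fun measurableSet_Ico (ae_of_all _ fun t ht =>
          mul_le_mul_left (hmono hx0 (hx0.trans_le ht.1) ht.1) _))
          (esl_mono_set fun t ht => ⟨hx0.trans_le ht.1, ht.2⟩)
      calc a x * ((a s)⁻¹ * g s) * esl h (Ico x s)
          = (a s)⁻¹ * g s * (a x * esl h (Ico x s)) := by ring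
        _ ≤ (a s)⁻¹ * g s * esl (fun t => a t * h t) (Ioo 0 s) := mul_le_mul_right hax _
        _ ≤ B2 := hs2 hs0
    have t2 : a x * ((a s)⁻¹ * g s) * esl h (Ici s) ≤ B1 := by
      have hgs : a x * ((a s)⁻¹ * g s) ≤ g s := by
        calc a x * ((a s)⁻¹ * g s) = (a x * (a s)⁻¹) * g s := by ring
          _ ≤ 1 * g s := mul_le_mul_left
              ((mul_le_mul_left (hmono hx0 hs0 hs) _).trans (ENNReal.mul_inv_le_one _)) _
          _ = g s := one_mul _
      calc a x * ((a s)⁻¹ * g s) * esl h (Ici s) ≤ g s * esl h (Ici s) :=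
            mul_le_mul_left hgs _
        _ = g s * esl h (Ioi s) := by rw [esl_Ici_eq_Ioi]
        _ ≤ B1 := hs1 hs0
    calc a x * ((a s)⁻¹ * g s) * Q1
        ≤ a x * ((a s)⁻¹ * g s) * (esl h (Ico x s) + esl h (Ici s)) :=
          mul_le_mul_right hQ1split _
      _ = a x * ((a s)⁻¹ * g s) * esl h (Ico x s)
            + a x * ((a s)⁻¹ * g s) * esl h (Ici s) := by ring
      _ ≤ B2 + B1 := add_le_add t1 t2
      _ = B1 + B2 := add_comm _ _
  have C4' : (a x * P2) * ((a x)⁻¹ * Q2) ≤ B1 + B2 := by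
    have heq : (a x * P2) * ((a x)⁻¹ * Q2) = (a x * (a x)⁻¹) * (P2 * Q2) := by ring
    rw [heq, ENNReal.mul_inv_cancel ha0.ne' hatop.ne, one_mul]
    exact C4.trans le_add_self
  calc Sf a g x * Tf a h x ≤ (P1 + a x * P2) * (Q1 + (a x)⁻¹ * Q2) := mul_le_mul' hS hT
    _ = P1 * Q1 + P1 * ((a x)⁻¹ * Q2) + (a x * P2) * Q1 + (a x * P2) * ((a x)⁻¹ * Q2) := by
        ring
    _ ≤ (B1 + B2) + (B1 + B2) + (B1 + B2) + (B1 + B2) :=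
        add_le_add (add_le_add (add_le_add (C1.trans le_self_add) C2) C3) C4'
    _ = 4 * (B1 + B2) := by ring

end GluingAux

/-- Gluing lemma (Lemma 2.1): for a nondecreasing weight `a` on `(0,∞)` and nonnegative
measurable `g, h`, with `𝒜(x,t) = a x / (a x + a t)`,
`esssup_x (esssup_t 𝒜(x,t) g t) (esssup_t 𝒜(t,x) h t)
  ≈ esssup_x g x (esssup_{t>x} h t) + esssup_x (a x)⁻¹ g x (esssup_{t<x} a t * h t)`,
with equivalence constants independent of `a`, `g`, `h`. -/
theorem gluing_esssup_esssup :
    ∃ c C : ℝ≥0∞, 0 < c ∧ c < ∞ ∧ 0 < C ∧ C < ∞ ∧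
      ∀ a g h : ℝ → ℝ≥0∞, Measurable a → Measurable g → Measurable h →
        MonotoneOn a (Ioi 0) →
        (∀ᵐ x ∂(volume.restrict (Ioi (0:ℝ))), 0 < a x ∧ a x < ∞) →
        let A := essSup (fun x =>
            (essSup (fun t => a x / (a x + a t) * g t) (volume.restrict (Ioi (0:ℝ)))) *
            (essSup (fun t => a t / (a t + a x) * h t) (volume.restrict (Ioi (0:ℝ)))))
          (volume.restrict (Ioi (0:ℝ)))
        let B := essSup (fun x => g x * essSup h (volume.restrict (Ioi x)))
            (volume.restrict (Ioi (0:ℝ)))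
          + essSup (fun x => (a x)⁻¹ * g x *
              essSup (fun t => a t * h t) (volume.restrict (Ioo (0:ℝ) x)))
            (volume.restrict (Ioi (0:ℝ)))
        c * B ≤ A ∧ A ≤ C * B := by
  refine ⟨8⁻¹, 4, by norm_num, by norm_num, by norm_num, by norm_num, ?_⟩
  intro a g h ha hg hh hmono hae
  have hae' : ∀ᵐ x ∂(volume : Measure ℝ), x ∈ Ioi 0 → 0 < a x ∧ a x < ∞ :=
    (ae_restrict_iff' measurableSet_Ioi).mp hae
  intro A B
  have hBA : B ≤ 8 * A := by
    have h1 := GluingAux.lower1 (g := g) (h := h) hmono hae'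
    have h2 := GluingAux.lower2 (g := g) (h := h) hmono hae'
    calc B ≤ 4 * A + 4 * A := add_le_add h1 h2
      _ = 8 * A := by ring
  constructor
  · calc 8⁻¹ * B ≤ 8⁻¹ * (8 * A) := mul_le_mul_right hBA _
      _ = A := by rw [← mul_assoc, ENNReal.inv_mul_cancel (by norm_num) (by norm_num), one_mul]
  · exact GluingAux.upper hmono hae'
end

section
/- Let β > 0, let a be a nondecreasing weight on (0,∞) and let g, h be nonnegative measurable functions on (0,∞). Then ess sup_{x∈(0,∞)} [ (∫_0^∞ 𝒜(x,t)^β g(t) dt)^{1/β} · (ess sup_{t∈(0,∞)} 𝒜(t,x)·h(t)) ] ≈ ess sup_{x∈(0,∞)} [ h(x) (∫_0^x g(t) dt)^{1/β} ] + ess sup_{x∈(0,∞)} [ a(x) h(x) (∫_x^∞ a(t)^{−β} g(t) dt)^{1/β} ], with equivalence constants depending only on β. -/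
open MeasureTheory ENNReal Set

namespace GluingAux


lemma ker_le_one (u w : ℝ≥0∞) : u / (u + w) ≤ 1 :=
  ENNReal.div_le_of_le_mul (by simp)

lemma ker_le_div (u w : ℝ≥0∞) : u / (u + w) ≤ u / w :=
  ENNReal.div_le_div_left le_add_self u

lemma half_le_ker {u w : ℝ≥0∞} (hu0 : u ≠ 0) (hu : u ≠ ∞) (hw : w ≤ u) :
    2⁻¹ ≤ u / (u + w) := by
  have h1 : u + w ≤ 2 * u := by rw [two_mul]; exact add_le_add_right hw u
  calc (2:ℝ≥0∞)⁻¹ = 1 / 2 := by rw [one_div]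
    _ = 1 * u / (2 * u) := (ENNReal.mul_div_mul_right 1 2 hu0 hu).symm
    _ = u / (2 * u) := by rw [one_mul]
    _ ≤ u / (u + w) := ENNReal.div_le_div_left h1 u

lemma ker_ge {u w : ℝ≥0∞} (hw0 : w ≠ 0) (hw : w ≠ ∞) (hu : u ≤ w) :
    2⁻¹ * (u * w⁻¹) ≤ u / (u + w) := by
  have h1 : u + w ≤ 2 * w := by rw [two_mul]; exact add_le_add_left hu w
  have h2 : u / (2 * w) = 2⁻¹ * (u * w⁻¹) := by
    rw [div_eq_mul_inv, ENNReal.mul_inv (Or.inl two_ne_zero) (Or.inl ENNReal.ofNat_ne_top)]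
    ring
  rw [← h2]
  exact ENNReal.div_le_div_left h1 u

lemma ker_comp {u v w : ℝ≥0∞} (hu : u ≠ ∞) (hv0 : v ≠ 0) (hv : v ≠ ∞) (hw : w ≠ ∞) :
    u / (u + v) * (v / (v + w)) ≤ u / (u + w) := by
  rcases eq_or_ne u 0 with rfl | hu0
  · simp
  lift u to NNReal using hu
  lift v to NNReal using hv
  lift w to NNReal using hw
  have hv0' : v ≠ 0 := by exact_mod_cast hv0
  have hu0' : u ≠ 0 := by exact_mod_cast hu0
  have huv : u + v ≠ 0 := by
    intro hh; exact hv0' (add_eq_zero.mp hh).2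
  have hvw : v + w ≠ 0 := by
    intro hh; exact hv0' (add_eq_zero.mp hh).1
  have huw : u + w ≠ 0 := by
    intro hh; exact hu0' (add_eq_zero.mp hh).1
  rw [← ENNReal.coe_add, ← ENNReal.coe_add, ← ENNReal.coe_add,
    ← ENNReal.coe_div huv, ← ENNReal.coe_div hvw,
    ← ENNReal.coe_div huw, ← ENNReal.coe_mul, ENNReal.coe_le_coe,
    ← NNReal.coe_le_coe]
  push_cast
  have hu' : (0:ℝ) ≤ u := u.coe_nonneg
  have hv' : (0:ℝ) ≤ v := v.coe_nonneg
  have hw' : (0:ℝ) ≤ w := w.coe_nonneg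
  have hu0'' : (0:ℝ) < u := lt_of_le_of_ne hu' (by exact_mod_cast hu0'.symm)
  have hv0'' : (0:ℝ) < v := lt_of_le_of_ne hv' (by exact_mod_cast hv0'.symm)
  rw [div_mul_div_comm, div_le_div_iff₀ (by positivity) (by positivity)]
  nlinarith [mul_nonneg (mul_nonneg hu' hu') hw', mul_nonneg hu' (mul_nonneg hv' hv')]

lemma add_rpow_le {β : ℝ} (hβ : 0 < β) (u v : ℝ≥0∞) :
    (u + v) ^ (1/β) ≤ 2 ^ (1/β) * (u ^ (1/β) + v ^ (1/β)) := by
  have hβ' : (0:ℝ) ≤ 1/β := by positivity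
  rcases le_total u v with huv | huv
  · calc (u + v) ^ (1/β) ≤ (2 * v) ^ (1/β) :=
        ENNReal.rpow_le_rpow (by rw [two_mul]; exact add_le_add_left huv v) hβ'
      _ = 2 ^ (1/β) * v ^ (1/β) := ENNReal.mul_rpow_of_nonneg _ _ hβ'
      _ ≤ 2 ^ (1/β) * (u ^ (1/β) + v ^ (1/β)) := mul_le_mul_right le_add_self _
  · calc (u + v) ^ (1/β) ≤ (2 * u) ^ (1/β) :=
        ENNReal.rpow_le_rpow (by rw [two_mul]; exact add_le_add (le_refl u) huv) hβ'
      _ = 2 ^ (1/β) * u ^ (1/β) := ENNReal.mul_rpow_of_nonneg _ _ hβ'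
      _ ≤ 2 ^ (1/β) * (u ^ (1/β) + v ^ (1/β)) := mul_le_mul_right le_self_add _

lemma aux_left {β : ℝ} (hβ : 0 < β) {c W : ℝ≥0∞} (ν : Measure ℝ) {t : ℝ} (ht : 0 < t)
    {P : ℝ → Prop} (hP : ∀ l r : ℝ, 0 ≤ l → l < r → ∃ x, P x ∧ l < x ∧ x < r)
    (hb : ∀ x, P x → 0 < x → x < t → W * (ν (Ioo 0 x)) ^ (1/β) ≤ c) :
    W * (ν (Ioo 0 t)) ^ (1/β) ≤ c := by
  have hpick : ∀ n : ℕ, ∃ x, P x ∧ max (t/2) (t - 1/(n+1)) < x ∧ x < t := by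
    intro n
    refine hP _ _ (le_max_of_le_left (by positivity)) ?_
    refine max_lt (by linarith) ?_
    have : (0:ℝ) < 1/(n+1) := by positivity
    linarith
  choose x hx using hpick
  have hx0 : ∀ n, 0 < x n := by
    intro n
    have h1 := (hx n).2.1
    have h2 : t/2 ≤ max (t/2) (t - 1/(n+1)) := le_max_left _ _
    linarith
  have hgc : GaloisConnection (fun y : ℝ≥0∞ => y ^ (1/β)) (fun y : ℝ≥0∞ => y ^ β) :=
    fun u v => by rw [one_div]; exact ENNReal.rpow_inv_le_iff hβ
  have hU : Ioo (0:ℝ) t = ⋃ n, Ioo (0:ℝ) (x n) := by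
    apply Subset.antisymm
    · intro y hy
      obtain ⟨n, hn⟩ := exists_nat_one_div_lt (show (0:ℝ) < t - y by linarith [hy.2])
      refine mem_iUnion.2 ⟨n, hy.1, ?_⟩
      have h1 := (hx n).2.1
      have h2 : t - 1/(n+1) ≤ max (t/2) (t - 1/(n+1)) := le_max_right _ _
      linarith
    · intro y hy
      obtain ⟨n, hn⟩ := mem_iUnion.1 hy
      exact ⟨hn.1, hn.2.trans (hx n).2.2⟩
  have hdir : Directed (· ⊆ ·) fun n => Ioo (0:ℝ) (x n) := by
    intro m n
    rcases le_total (x m) (x n) with hmn | hmn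
    · exact ⟨n, Ioo_subset_Ioo_right hmn, Subset.rfl⟩
    · exact ⟨m, Subset.rfl, Ioo_subset_Ioo_right hmn⟩
  have hkey : (ν (Ioo 0 t)) ^ (1/β) = ⨆ n, (ν (Ioo 0 (x n))) ^ (1/β) := by
    rw [hU, hdir.measure_iUnion]
    exact hgc.l_iSup
  rw [hkey, ENNReal.mul_iSup]
  exact iSup_le fun n => hb (x n) (hx n).1 (hx0 n) (hx n).2.2

lemma aux_right {β : ℝ} (hβ : 0 < β) {c W : ℝ≥0∞} (ν : Measure ℝ) {t : ℝ} (ht : 0 < t)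
    {P : ℝ → Prop} (hP : ∀ l r : ℝ, 0 ≤ l → l < r → ∃ x, P x ∧ l < x ∧ x < r)
    (hb : ∀ x, P x → t < x → W * (ν (Ioi x)) ^ (1/β) ≤ c) :
    W * (ν (Ioi t)) ^ (1/β) ≤ c := by
  have hpick : ∀ n : ℕ, ∃ x, P x ∧ t < x ∧ x < t + 1/(n+1) := by
    intro n
    refine hP _ _ ht.le ?_
    have : (0:ℝ) < 1/(n+1) := by positivity
    linarith
  choose x hx using hpick
  have hgc : GaloisConnection (fun y : ℝ≥0∞ => y ^ (1/β)) (fun y : ℝ≥0∞ => y ^ β) :=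
    fun u v => by rw [one_div]; exact ENNReal.rpow_inv_le_iff hβ
  have hU : Ioi t = ⋃ n, Ioi (x n) := by
    apply Subset.antisymm
    · intro y hy
      obtain ⟨n, hn⟩ := exists_nat_one_div_lt (show (0:ℝ) < y - t from by
        simp only [mem_Ioi] at hy; linarith)
      refine mem_iUnion.2 ⟨n, ?_⟩
      have h1 := (hx n).2.2
      simp only [mem_Ioi]
      linarith
    · intro y hy
      obtain ⟨n, hn⟩ := mem_iUnion.1 hy
      simp only [mem_Ioi] at hn ⊢
      exact (hx n).2.1.trans hn
  have hdir : Directed (· ⊆ ·) fun n => Ioi (x n) := by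
    intro m n
    rcases le_total (x m) (x n) with hmn | hmn
    · exact ⟨m, Subset.rfl, Ioi_subset_Ioi hmn⟩
    · exact ⟨n, Ioi_subset_Ioi hmn, Subset.rfl⟩
  have hkey : (ν (Ioi t)) ^ (1/β) = ⨆ n, (ν (Ioi (x n))) ^ (1/β) := by
    rw [hU, hdir.measure_iUnion]
    exact hgc.l_iSup
  rw [hkey, ENNReal.mul_iSup]
  exact iSup_le fun n => hb (x n) (hx n).1 (hx n).2.1


end GluingAux

open GluingAux

/-- Gluing lemma (Lemma 2.3): for `β > 0`, a nondecreasing weight `a` on `(0,∞)` and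
nonnegative measurable `g, h`, with `𝒜(x,t) = a x / (a x + a t)`,
`esssup_x (∫_0^∞ 𝒜(x,t)^β g t dt)^{1/β} (esssup_t 𝒜(t,x) h t)
  ≈ esssup_x h x (∫_0^x g)^{1/β} + esssup_x a x * h x * (∫_x^∞ a^{-β} g)^{1/β}`,
with equivalence constants depending only on `β`. -/
theorem gluing_integral_esssup (β : ℝ) (hβ : 0 < β) :
    ∃ c C : ℝ≥0∞, 0 < c ∧ c < ∞ ∧ 0 < C ∧ C < ∞ ∧
      ∀ a g h : ℝ → ℝ≥0∞, Measurable a → Measurable g → Measurable h →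
        MonotoneOn a (Ioi 0) →
        (∀ᵐ x ∂(volume.restrict (Ioi (0:ℝ))), 0 < a x ∧ a x < ∞) →
        let A := essSup (fun x =>
            (∫⁻ t in Ioi (0:ℝ), (a x / (a x + a t)) ^ β * g t) ^ (1 / β) *
            (essSup (fun t => a t / (a t + a x) * h t) (volume.restrict (Ioi (0:ℝ)))))
          (volume.restrict (Ioi (0:ℝ)))
        let B := essSup (fun x => h x * (∫⁻ t in Ioo (0:ℝ) x, g t) ^ (1 / β))
            (volume.restrict (Ioi (0:ℝ)))
          + essSup (fun x => a x * h x *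
              (∫⁻ t in Ioi x, a t ^ (-β) * g t) ^ (1 / β))
            (volume.restrict (Ioi (0:ℝ)))
        c * B ≤ A ∧ A ≤ C * B := by
  have hβ' : (0:ℝ) ≤ 1/β := by positivity
  refine ⟨(8:ℝ≥0∞)⁻¹, 2 ^ (1/β), ?_, ?_, ?_, ?_, ?_⟩
  · simp
  · simp
  · exact ENNReal.rpow_pos (by norm_num) (by norm_num)
  · exact ENNReal.rpow_lt_top_of_nonneg hβ' (by norm_num)
  intro a g h ma mg mh mono hae A B
  set μ0 : Measure ℝ := volume.restrict (Ioi (0:ℝ)) with hμ0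
  have hA : A = essSup (fun x =>
      (∫⁻ t in Ioi (0:ℝ), (a x / (a x + a t)) ^ β * g t) ^ (1 / β) *
      essSup (fun t => a t / (a t + a x) * h t) μ0) μ0 := rfl
  have hB : B = essSup (fun x => h x * (∫⁻ t in Ioo (0:ℝ) x, g t) ^ (1 / β)) μ0
      + essSup (fun x => a x * h x * (∫⁻ t in Ioi x, a t ^ (-β) * g t) ^ (1 / β)) μ0 := rfl
  have hrp : ∀ y : ℝ≥0∞, (y ^ β) ^ (1/β) = y := fun y => by
    rw [← ENNReal.rpow_mul, mul_one_div_cancel hβ.ne', ENNReal.rpow_one]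
  have hdouble : ∀ {u v : ℝ≥0∞}, 2⁻¹ * u ≤ v → u ≤ 2 * v := by
    intro u v huv
    calc u = 2 * (2⁻¹ * u) := by
          rw [← mul_assoc, ENNReal.mul_inv_cancel two_ne_zero ENNReal.ofNat_ne_top, one_mul]
      _ ≤ 2 * v := mul_le_mul_right huv 2
  have hgood : ∀ᵐ x ∂μ0, 0 < x ∧ 0 < a x ∧ a x < ∞ := by
    filter_upwards [ae_restrict_mem measurableSet_Ioi, hae] with x hx h2
    exact ⟨hx, h2.1, h2.2⟩
  have kermeas : ∀ c : ℝ≥0∞, Measurable (fun s : ℝ => (c / (c + a s)) ^ β * g s) :=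
    fun c => (((measurable_const.div (measurable_const.add ma))).pow_const β).mul mg
  -- upper estimate for the inner integral
  have hI_upper : ∀ᵐ t ∂μ0,
      (∫⁻ s in Ioi (0:ℝ), (a t / (a t + a s)) ^ β * g s) ≤
        (∫⁻ s in Ioo (0:ℝ) t, g s) + (a t) ^ β * ∫⁻ s in Ioi t, (a s) ^ (-β) * g s := by
    filter_upwards [hgood] with t ht
    obtain ⟨ht0, hat0, hatfin⟩ := ht
    have hdisj : Disjoint (Ioo (0:ℝ) t) (Ici t) :=
      disjoint_left.2 fun s hs hs' => absurd hs' (not_le.2 hs.2)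
    have hsplit : (∫⁻ s in Ioi (0:ℝ), (a t / (a t + a s)) ^ β * g s)
        = (∫⁻ s in Ioo (0:ℝ) t, (a t / (a t + a s)) ^ β * g s)
          + ∫⁻ s in Ici t, (a t / (a t + a s)) ^ β * g s := by
      rw [← Ioo_union_Ici_eq_Ioi ht0, lintegral_union measurableSet_Ici hdisj]
    rw [hsplit]
    refine add_le_add ?_ ?_
    · refine lintegral_mono fun s => ?_
      calc (a t / (a t + a s)) ^ β * g s ≤ 1 ^ β * g s :=
          mul_le_mul_left (ENNReal.rpow_le_rpow (ker_le_one _ _) hβ.le) _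
        _ = g s := by rw [ENNReal.one_rpow, one_mul]
    · have hIci : (∫⁻ s in Ici t, (a t / (a t + a s)) ^ β * g s)
          = ∫⁻ s in Ioi t, (a t / (a t + a s)) ^ β * g s :=
        (setLIntegral_congr (Ioi_ae_eq_Ici (a := t))).symm
      rw [hIci, ← lintegral_const_mul' _ _ (ENNReal.rpow_lt_top_of_nonneg hβ.le hatfin.ne).ne]
      refine lintegral_mono fun s => ?_
      calc (a t / (a t + a s)) ^ β * g s ≤ (a t / a s) ^ β * g s :=
          mul_le_mul_left (ENNReal.rpow_le_rpow (ker_le_div _ _) hβ.le) _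
        _ = (a t) ^ β * ((a s) ^ (-β) * g s) := by
          rw [ENNReal.div_rpow_of_nonneg _ _ hβ.le, ENNReal.rpow_neg, div_eq_mul_inv, mul_assoc]
  -- lower estimates for the inner integral
  have hI_low1 : ∀ᵐ t ∂μ0, (2:ℝ≥0∞)⁻¹ ^ β * ∫⁻ s in Ioo (0:ℝ) t, g s
      ≤ ∫⁻ s in Ioi (0:ℝ), (a t / (a t + a s)) ^ β * g s := by
    filter_upwards [hgood] with t ht
    obtain ⟨ht0, hat0, hatfin⟩ := ht
    calc (2:ℝ≥0∞)⁻¹ ^ β * ∫⁻ s in Ioo (0:ℝ) t, g s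
        = ∫⁻ s in Ioo (0:ℝ) t, 2⁻¹ ^ β * g s :=
          (lintegral_const_mul' _ _
            (ENNReal.rpow_lt_top_of_nonneg hβ.le (by simp)).ne).symm
      _ ≤ ∫⁻ s in Ioo (0:ℝ) t, (a t / (a t + a s)) ^ β * g s := by
          refine setLIntegral_mono (kermeas (a t)) fun s hs => ?_
          refine mul_le_mul_left (ENNReal.rpow_le_rpow ?_ hβ.le) _
          exact half_le_ker hat0.ne' hatfin.ne
            (mono (mem_Ioi.2 hs.1) (mem_Ioi.2 ht0) hs.2.le)
      _ ≤ ∫⁻ s in Ioi (0:ℝ), (a t / (a t + a s)) ^ β * g s :=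
          lintegral_mono_set Ioo_subset_Ioi_self
  have hI_low2 : ∀ᵐ t ∂μ0, (2⁻¹ * a t) ^ β * ∫⁻ s in Ioi t, (a s) ^ (-β) * g s
      ≤ ∫⁻ s in Ioi (0:ℝ), (a t / (a t + a s)) ^ β * g s := by
    filter_upwards [hgood] with t ht
    obtain ⟨ht0, hat0, hatfin⟩ := ht
    have hsub : Ioi t ⊆ Ioi (0:ℝ) := Ioi_subset_Ioi ht0.le
    have hconst : ((2:ℝ≥0∞)⁻¹ * a t) ^ β ≠ ∞ :=
      (ENNReal.rpow_lt_top_of_nonneg hβ.le (ENNReal.mul_ne_top (by simp) hatfin.ne)).ne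
    calc (2⁻¹ * a t) ^ β * ∫⁻ s in Ioi t, (a s) ^ (-β) * g s
        = ∫⁻ s in Ioi t, (2⁻¹ * a t) ^ β * ((a s) ^ (-β) * g s) :=
          (lintegral_const_mul' _ _ hconst).symm
      _ ≤ ∫⁻ s in Ioi t, (a t / (a t + a s)) ^ β * g s := by
          refine lintegral_mono_ae ?_
          filter_upwards [ae_restrict_of_ae_restrict_of_subset hsub hae,
            ae_restrict_mem measurableSet_Ioi] with s hs hst
          obtain ⟨has0, hasfin⟩ := hs
          have hle : a t ≤ a s :=
            mono (mem_Ioi.2 ht0) (mem_Ioi.2 (ht0.trans hst)) (le_of_lt hst)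
          calc (2⁻¹ * a t) ^ β * ((a s) ^ (-β) * g s)
              = (2⁻¹ * (a t * (a s)⁻¹)) ^ β * g s := by
                rw [← mul_assoc, ENNReal.rpow_neg, ← ENNReal.inv_rpow,
                  ← ENNReal.mul_rpow_of_nonneg _ _ hβ.le, mul_assoc]
            _ ≤ (a t / (a t + a s)) ^ β * g s :=
                mul_le_mul_left (ENNReal.rpow_le_rpow
                  (ker_ge has0.ne' hasfin.ne hle) hβ.le) _
      _ ≤ ∫⁻ s in Ioi (0:ℝ), (a t / (a t + a s)) ^ β * g s := lintegral_mono_set hsub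
  -- composition
  have hcomp : ∀ᵐ x ∂μ0, ∀ᵐ t ∂μ0,
      (a t / (a t + a x)) ^ β * ∫⁻ s in Ioi (0:ℝ), (a x / (a x + a s)) ^ β * g s
        ≤ ∫⁻ s in Ioi (0:ℝ), (a t / (a t + a s)) ^ β * g s := by
    filter_upwards [hgood] with x hx
    obtain ⟨hx0, hax0, haxfin⟩ := hx
    filter_upwards [hgood] with t ht
    obtain ⟨ht0, hat0, hatfin⟩ := ht
    have hkfin : (a t / (a t + a x)) ^ β ≠ ∞ := by
      refine ne_top_of_le_ne_top one_ne_top ?_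
      calc (a t / (a t + a x)) ^ β ≤ 1 ^ β :=
          ENNReal.rpow_le_rpow (ker_le_one _ _) hβ.le
        _ = 1 := ENNReal.one_rpow β
    rw [← lintegral_const_mul' _ _ hkfin]
    refine lintegral_mono_ae ?_
    filter_upwards [hgood] with s hs
    obtain ⟨hs0, has0, hasfin⟩ := hs
    calc (a t / (a t + a x)) ^ β * ((a x / (a x + a s)) ^ β * g s)
        = ((a t / (a t + a x)) * (a x / (a x + a s))) ^ β * g s := by
          rw [← mul_assoc, ← ENNReal.mul_rpow_of_nonneg _ _ hβ.le]
      _ ≤ (a t / (a t + a s)) ^ β * g s :=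
          mul_le_mul_left (ENNReal.rpow_le_rpow
            (ker_comp hatfin.ne hax0.ne' haxfin.ne hasfin.ne) hβ.le) _
  -- UPPER BOUND
  have upper : essSup (fun x =>
      (∫⁻ t in Ioi (0:ℝ), (a x / (a x + a t)) ^ β * g t) ^ (1 / β) *
      essSup (fun t => a t / (a t + a x) * h t) μ0) μ0
      ≤ 2 ^ (1/β) * (essSup (fun x => h x * (∫⁻ t in Ioo (0:ℝ) x, g t) ^ (1 / β)) μ0
        + essSup (fun x => a x * h x * (∫⁻ t in Ioi x, a t ^ (-β) * g t) ^ (1 / β)) μ0) := by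
    refine essSup_le_of_ae_le _ ?_
    filter_upwards [hgood, hcomp] with x hx hcx
    obtain ⟨hx0, hax0, haxfin⟩ := hx
    conv_lhs => rw [← ENNReal.essSup_const_mul]
    refine essSup_le_of_ae_le _ ?_
    filter_upwards [hgood, hI_upper, hcx,
      ae_le_essSup (μ := μ0) (fun x => h x * (∫⁻ t in Ioo (0:ℝ) x, g t) ^ (1 / β)),
      ae_le_essSup (μ := μ0)
        (fun x => a x * h x * (∫⁻ t in Ioi x, a t ^ (-β) * g t) ^ (1 / β))]
      with t ht hIt hct hK1 hK2
    obtain ⟨ht0, hat0, hatfin⟩ := ht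
    calc (∫⁻ s in Ioi (0:ℝ), (a x / (a x + a s)) ^ β * g s) ^ (1 / β) *
          (a t / (a t + a x) * h t)
        = ((a t / (a t + a x)) ^ β *
            ∫⁻ s in Ioi (0:ℝ), (a x / (a x + a s)) ^ β * g s) ^ (1 / β) * h t := by
          rw [ENNReal.mul_rpow_of_nonneg _ _ hβ', hrp]
          ring
      _ ≤ (∫⁻ s in Ioi (0:ℝ), (a t / (a t + a s)) ^ β * g s) ^ (1 / β) * h t :=
          mul_le_mul_left (ENNReal.rpow_le_rpow hct hβ') _
      _ ≤ ((∫⁻ s in Ioo (0:ℝ) t, g s)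
            + (a t) ^ β * ∫⁻ s in Ioi t, (a s) ^ (-β) * g s) ^ (1 / β) * h t :=
          mul_le_mul_left (ENNReal.rpow_le_rpow hIt hβ') _
      _ ≤ (2 ^ (1/β) * ((∫⁻ s in Ioo (0:ℝ) t, g s) ^ (1/β)
            + ((a t) ^ β * ∫⁻ s in Ioi t, (a s) ^ (-β) * g s) ^ (1/β))) * h t :=
          mul_le_mul_left (add_rpow_le hβ _ _) _
      _ = 2 ^ (1/β) * (h t * (∫⁻ s in Ioo (0:ℝ) t, g s) ^ (1/β)
            + a t * h t * (∫⁻ s in Ioi t, (a s) ^ (-β) * g s) ^ (1/β)) := by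
          rw [ENNReal.mul_rpow_of_nonneg _ _ hβ', hrp]
          ring
      _ ≤ 2 ^ (1/β) * (essSup (fun x => h x * (∫⁻ t in Ioo (0:ℝ) x, g t) ^ (1 / β)) μ0
            + essSup (fun x => a x * h x *
                (∫⁻ t in Ioi x, a t ^ (-β) * g t) ^ (1 / β)) μ0) :=
          mul_le_mul_right (add_le_add hK1 hK2) _
  -- LOWER BOUND machinery
  have hGE : ∀ᵐ x ∂μ0, 2⁻¹ * essSup h (volume.restrict (Ioi x))
      ≤ essSup (fun t => a t / (a t + a x) * h t) μ0 := by
    filter_upwards [hgood] with x hx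
    obtain ⟨hx0, hax0, haxfin⟩ := hx
    have h1 : essSup (fun t => 2⁻¹ * h t) (volume.restrict (Ioi x))
        ≤ essSup (fun t => a t / (a t + a x) * h t) (volume.restrict (Ioi x)) := by
      refine essSup_mono_ae ?_
      filter_upwards [ae_restrict_of_ae_restrict_of_subset (Ioi_subset_Ioi hx0.le) hae,
        ae_restrict_mem measurableSet_Ioi] with t ht hmem
      exact mul_le_mul_left (half_le_ker ht.1.ne' ht.2.ne
        (mono (mem_Ioi.2 hx0) (mem_Ioi.2 (hx0.trans hmem)) hmem.le)) _
    calc 2⁻¹ * essSup h (volume.restrict (Ioi x))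
        = essSup (fun t => 2⁻¹ * h t) (volume.restrict (Ioi x)) :=
          ENNReal.essSup_const_mul.symm
      _ ≤ essSup (fun t => a t / (a t + a x) * h t) (volume.restrict (Ioi x)) := h1
      _ ≤ essSup (fun t => a t / (a t + a x) * h t) μ0 :=
          essSup_mono_measure (Measure.absolutelyContinuous_of_le
            (Measure.restrict_mono (Ioi_subset_Ioi hx0.le) le_rfl))
  have hGH : ∀ᵐ x ∂μ0, 2⁻¹ * essSup (fun s => a s * h s) (volume.restrict (Ioo 0 x))
      ≤ a x * essSup (fun t => a t / (a t + a x) * h t) μ0 := by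
    filter_upwards [hgood] with x hx
    obtain ⟨hx0, hax0, haxfin⟩ := hx
    have h1 : essSup (fun t => (2⁻¹ * (a x)⁻¹) * (a t * h t)) (volume.restrict (Ioo 0 x))
        ≤ essSup (fun t => a t / (a t + a x) * h t) (volume.restrict (Ioo 0 x)) := by
      refine essSup_mono_ae ?_
      filter_upwards [ae_restrict_of_ae_restrict_of_subset Ioo_subset_Ioi_self hae,
        ae_restrict_mem measurableSet_Ioo] with t ht hmem
      have hle : a t ≤ a x := mono (mem_Ioi.2 hmem.1) (mem_Ioi.2 hx0) hmem.2.le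
      calc 2⁻¹ * (a x)⁻¹ * (a t * h t) = (2⁻¹ * (a t * (a x)⁻¹)) * h t := by ring
        _ ≤ (a t / (a t + a x)) * h t :=
            mul_le_mul_left (ker_ge hax0.ne' haxfin.ne hle) _
    calc 2⁻¹ * essSup (fun s => a s * h s) (volume.restrict (Ioo 0 x))
        = a x * ((2⁻¹ * (a x)⁻¹) *
            essSup (fun s => a s * h s) (volume.restrict (Ioo 0 x))) := by
          rw [← mul_assoc, show a x * (2⁻¹ * (a x)⁻¹) = 2⁻¹ by
            rw [mul_comm (2⁻¹:ℝ≥0∞), ← mul_assoc,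
              ENNReal.mul_inv_cancel hax0.ne' haxfin.ne, one_mul]]
      _ = a x * essSup (fun t => (2⁻¹ * (a x)⁻¹) * (a t * h t))
            (volume.restrict (Ioo 0 x)) := by rw [ENNReal.essSup_const_mul]
      _ ≤ a x * essSup (fun t => a t / (a t + a x) * h t)
            (volume.restrict (Ioo 0 x)) := mul_le_mul_right h1 _
      _ ≤ a x * essSup (fun t => a t / (a t + a x) * h t) μ0 :=
          mul_le_mul_right (essSup_mono_measure (Measure.absolutelyContinuous_of_le
            (Measure.restrict_mono Ioo_subset_Ioi_self le_rfl))) _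
  have hfgA := ae_le_essSup (μ := μ0) (fun x =>
      (∫⁻ t in Ioi (0:ℝ), (a x / (a x + a t)) ^ β * g t) ^ (1 / β) *
      essSup (fun t => a t / (a t + a x) * h t) μ0)
  rw [← hA] at hfgA
  set P : ℝ → Prop := fun x => 0 < x ∧
      (∫⁻ s in Ioo (0:ℝ) x, g s) ^ (1/β) * essSup h (volume.restrict (Ioi x)) ≤ 4 * A ∧
      (∫⁻ s in Ioi x, (a s) ^ (-β) * g s) ^ (1/β) *
        essSup (fun s => a s * h s) (volume.restrict (Ioo 0 x)) ≤ 4 * A with hPdef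
  have hP : ∀ᵐ x ∂μ0, P x := by
    filter_upwards [hgood, hI_low1, hI_low2, hGE, hGH, hfgA] with x hx hl1 hl2 hge hgh hfg
    obtain ⟨hx0, hax0, haxfin⟩ := hx
    refine ⟨hx0, ?_, ?_⟩
    · have h' := ENNReal.rpow_le_rpow hl1 hβ'
      rw [ENNReal.mul_rpow_of_nonneg _ _ hβ', hrp] at h'
      have hS2 := hdouble h'
      have hE2 := hdouble hge
      calc (∫⁻ s in Ioo (0:ℝ) x, g s) ^ (1/β) * essSup h (volume.restrict (Ioi x))
          ≤ (2 * (∫⁻ s in Ioi (0:ℝ), (a x / (a x + a s)) ^ β * g s) ^ (1 / β)) *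
            (2 * essSup (fun t => a t / (a t + a x) * h t) μ0) := mul_le_mul' hS2 hE2
        _ = 4 * ((∫⁻ s in Ioi (0:ℝ), (a x / (a x + a s)) ^ β * g s) ^ (1 / β) *
            essSup (fun t => a t / (a t + a x) * h t) μ0) := by ring
        _ ≤ 4 * A := mul_le_mul_right hfg 4
    · have h' := ENNReal.rpow_le_rpow hl2 hβ'
      rw [ENNReal.mul_rpow_of_nonneg _ _ hβ', hrp, mul_assoc] at h'
      have hT2 := hdouble h'
      have hH2 := hdouble hgh
      calc (∫⁻ s in Ioi x, (a s) ^ (-β) * g s) ^ (1/β) *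
            essSup (fun s => a s * h s) (volume.restrict (Ioo 0 x))
          ≤ (∫⁻ s in Ioi x, (a s) ^ (-β) * g s) ^ (1/β) *
            (2 * (a x * essSup (fun t => a t / (a t + a x) * h t) μ0)) :=
            mul_le_mul_right hH2 _
        _ = 2 * ((a x * (∫⁻ s in Ioi x, (a s) ^ (-β) * g s) ^ (1/β)) *
            essSup (fun t => a t / (a t + a x) * h t) μ0) := by ring
        _ ≤ 2 * ((2 * (∫⁻ s in Ioi (0:ℝ), (a x / (a x + a s)) ^ β * g s) ^ (1 / β)) *
            essSup (fun t => a t / (a t + a x) * h t) μ0) :=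
            mul_le_mul_right (mul_le_mul_left hT2 _) 2
        _ = 4 * ((∫⁻ s in Ioi (0:ℝ), (a x / (a x + a s)) ^ β * g s) ^ (1 / β) *
            essSup (fun t => a t / (a t + a x) * h t) μ0) := by ring
        _ ≤ 4 * A := mul_le_mul_right hfg 4
  have hpick : ∀ l r : ℝ, 0 ≤ l → l < r → ∃ x, P x ∧ l < x ∧ x < r := by
    intro l r hl hlr
    have hPnull : volume ({x | ¬ P x} ∩ Ioi 0) = 0 := by
      have h0 := ae_iff.mp hP
      rwa [hμ0, Measure.restrict_apply' measurableSet_Ioi] at h0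
    by_contra hcon
    push_neg at hcon
    have hsub : Ioo l r ⊆ {x | ¬ P x} ∩ Ioi 0 := by
      intro y hy
      refine ⟨fun hPy => absurd (hcon y hPy hy.1) (not_le.2 hy.2), lt_of_le_of_lt hl hy.1⟩
    have h1 := measure_mono_null hsub hPnull
    rw [Real.volume_Ioo] at h1
    exact (ENNReal.ofReal_pos.2 (by linarith)).ne' h1
  have hT1 : ∀ᵐ t ∂μ0, ∀ q : ℚ, (q:ℝ) < t → h t ≤ essSup h (volume.restrict (Ioi (q:ℝ))) := by
    rw [ae_all_iff]
    intro q
    have h1 := ae_le_essSup (μ := volume.restrict (Ioi (q:ℝ))) h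
    have h2 := (ae_restrict_iff' measurableSet_Ioi).mp h1
    exact ae_restrict_of_ae h2
  have hT2 : ∀ᵐ t ∂μ0, ∀ q : ℚ, 0 < t → t < (q:ℝ) →
      a t * h t ≤ essSup (fun s => a s * h s) (volume.restrict (Ioo 0 (q:ℝ))) := by
    rw [ae_all_iff]
    intro q
    have h1 := ae_le_essSup (μ := volume.restrict (Ioo (0:ℝ) (q:ℝ))) (fun s => a s * h s)
    have h2 := (ae_restrict_iff' measurableSet_Ioo).mp h1
    filter_upwards [ae_restrict_of_ae h2] with t ht h0t htq
    exact ht ⟨h0t, htq⟩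
  have low1 : essSup (fun x => h x * (∫⁻ t in Ioo (0:ℝ) x, g t) ^ (1 / β)) μ0 ≤ 4 * A := by
    refine essSup_le_of_ae_le _ ?_
    filter_upwards [hgood, hT1] with t ht hTt
    obtain ⟨ht0, _, _⟩ := ht
    have hν : ∀ u : Set ℝ, MeasurableSet u →
        (volume.withDensity g) u = ∫⁻ s in u, g s := fun u hu => withDensity_apply g hu
    rw [show (∫⁻ s in Ioo (0:ℝ) t, g s) = (volume.withDensity g) (Ioo 0 t) from
      (hν _ measurableSet_Ioo).symm]
    refine aux_left hβ (volume.withDensity g) ht0 hpick ?_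
    intro x hPx hx0 hxt
    rw [hν _ measurableSet_Ioo]
    obtain ⟨q, hq1, hq2⟩ := exists_rat_btwn hxt
    have hht : h t ≤ essSup h (volume.restrict (Ioi x)) :=
      (hTt q hq2).trans (essSup_mono_measure (Measure.absolutelyContinuous_of_le
        (Measure.restrict_mono (Ioi_subset_Ioi hq1.le) le_rfl)))
    calc h t * (∫⁻ s in Ioo (0:ℝ) x, g s) ^ (1/β)
        ≤ essSup h (volume.restrict (Ioi x)) * (∫⁻ s in Ioo (0:ℝ) x, g s) ^ (1/β) :=
          mul_le_mul_left hht _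
      _ = (∫⁻ s in Ioo (0:ℝ) x, g s) ^ (1/β) * essSup h (volume.restrict (Ioi x)) :=
          mul_comm _ _
      _ ≤ 4 * A := hPx.2.1
  have low2 : essSup (fun x => a x * h x * (∫⁻ t in Ioi x, a t ^ (-β) * g t) ^ (1 / β)) μ0
      ≤ 4 * A := by
    refine essSup_le_of_ae_le _ ?_
    filter_upwards [hgood, hT2] with t ht hTt
    obtain ⟨ht0, _, _⟩ := ht
    have hν : ∀ u : Set ℝ, MeasurableSet u →
        (volume.withDensity (fun s => (a s) ^ (-β) * g s)) u
          = ∫⁻ s in u, (a s) ^ (-β) * g s :=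
      fun u hu => withDensity_apply _ hu
    rw [show (∫⁻ s in Ioi t, (a s) ^ (-β) * g s)
        = (volume.withDensity (fun s => (a s) ^ (-β) * g s)) (Ioi t) from
      (hν _ measurableSet_Ioi).symm]
    refine aux_right hβ _ ht0 hpick ?_
    intro x hPx hxt
    rw [hν _ measurableSet_Ioi]
    obtain ⟨q, hq1, hq2⟩ := exists_rat_btwn hxt
    have hht : a t * h t ≤ essSup (fun s => a s * h s) (volume.restrict (Ioo 0 x)) :=
      (hTt q ht0 hq1).trans (essSup_mono_measure (Measure.absolutelyContinuous_of_le
        (Measure.restrict_mono (Ioo_subset_Ioo_right hq2.le) le_rfl)))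
    calc a t * h t * (∫⁻ s in Ioi x, (a s) ^ (-β) * g s) ^ (1/β)
        ≤ essSup (fun s => a s * h s) (volume.restrict (Ioo 0 x)) *
            (∫⁻ s in Ioi x, (a s) ^ (-β) * g s) ^ (1/β) := mul_le_mul_left hht _
      _ = (∫⁻ s in Ioi x, (a s) ^ (-β) * g s) ^ (1/β) *
            essSup (fun s => a s * h s) (volume.restrict (Ioo 0 x)) := mul_comm _ _
      _ ≤ 4 * A := hPx.2.2
  constructor
  · rw [hB]
    calc (8:ℝ≥0∞)⁻¹ * (essSup (fun x => h x * (∫⁻ t in Ioo (0:ℝ) x, g t) ^ (1 / β)) μ0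
          + essSup (fun x => a x * h x * (∫⁻ t in Ioi x, a t ^ (-β) * g t) ^ (1 / β)) μ0)
        ≤ 8⁻¹ * (4 * A + 4 * A) := mul_le_mul_right (add_le_add low1 low2) _
      _ = 8⁻¹ * 8 * A := by ring
      _ = A := by rw [ENNReal.inv_mul_cancel (by norm_num) (by norm_num), one_mul]
  · rw [hA, hB]
    exact upper
end

section
/- Let α, β > 0, let a be a nondecreasing weight on (0,∞) and let g, h be nonnegative measurable functions on (0,∞). Then ess sup_{x∈(0,∞)} [ (∫_0^∞ 𝒜(x,t)^β g(t) dt)^{1/β} · (∫_0^∞ 𝒜(t,x)^α h(t) dt)^{1/α} ] ≈ ess sup_{x∈(0,∞)} [ (∫_0^x g(t) dt)^{1/β} (∫_x^∞ h(t) dt)^{1/α} ] + ess sup_{x∈(0,∞)} [ (∫_x^∞ a(t)^{−β} g(t) dt)^{1/β} (∫_0^x a(t)^α h(t) dt)^{1/α} ], with equivalence constants depending only on α and β. -/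
open MeasureTheory ENNReal Set Filter

lemma supRpowLe {s : Set ℝ} (f : ℝ → ℝ≥0∞) {p : ℝ} (hp : 0 < p) :
    (⨆ u ∈ s, f u) ^ p ≤ ⨆ u ∈ s, f u ^ p := by
  set S := ⨆ u ∈ s, f u ^ p with hS
  have h1 : ∀ u ∈ s, f u ≤ S ^ p⁻¹ := by
    intro u hu
    have h0 : f u ^ p ≤ S := le_iSup₂ (f := fun u _ => f u ^ p) u hu
    have h2 : (f u ^ p) ^ p⁻¹ ≤ S ^ p⁻¹ := ENNReal.rpow_le_rpow h0 (by positivity)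
    rwa [← ENNReal.rpow_mul, mul_inv_cancel₀ hp.ne', ENNReal.rpow_one] at h2
  have h3 : (⨆ u ∈ s, f u) ≤ S ^ p⁻¹ := iSup₂_le h1
  have h4 := ENNReal.rpow_le_rpow h3 hp.le
  rwa [← ENNReal.rpow_mul, inv_mul_cancel₀ hp.ne', ENNReal.rpow_one] at h4

lemma leftSup (f : ℝ → ℝ≥0∞) (hf : Measurable f) {w : ℝ} (hw : 0 < w) {N : Set ℝ}
    (hN : volume N = 0) :
    ∫⁻ t in Ioo 0 w, f t ≤ ⨆ u ∈ Ioo 0 w \ N, ∫⁻ t in Ioo 0 u, f t := by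
  have key : ∀ n : ℕ, ∃ u, u ∈ Ioo (w * (n + 1) / (n + 2)) w \ N := by
    intro n
    apply nonempty_of_measure_ne_zero (μ := volume)
    rw [measure_diff_null hN]
    have hlt : w * (n + 1) / (n + 2) < w := by
      rw [div_lt_iff₀ (by positivity)]; nlinarith
    rw [Real.volume_Ioo]
    simp only [ne_eq, ENNReal.ofReal_eq_zero, not_le]
    linarith
  choose u hu using key
  have hu1 : ∀ n, u n ∈ Ioo 0 w \ N := by
    intro n
    obtain ⟨h1, h2⟩ := hu n
    have hpos : (0:ℝ) < w * (n + 1) / (n + 2) := by positivity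
    exact ⟨⟨by linarith [h1.1], h1.2⟩, h2⟩
  have hUnion : Ioo (0:ℝ) w = ⋃ n, Ioo 0 (u n) := by
    ext t
    simp only [mem_iUnion, mem_Ioo]
    constructor
    · rintro ⟨ht0, htw⟩
      obtain ⟨n, hn⟩ : ∃ n : ℕ, t < w * (n + 1) / (n + 2) := by
        obtain ⟨n, hn⟩ := exists_nat_gt (w / (w - t))
        refine ⟨n, ?_⟩
        rw [lt_div_iff₀ (by positivity)]
        have hwt : 0 < w - t := by linarith
        have h2 : w / (w - t) < n := hn
        have h3 : w < n * (w - t) := by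
          rw [div_lt_iff₀ hwt] at h2; linarith
        nlinarith
      exact ⟨n, ht0, hn.trans (hu n).1.1⟩
    · rintro ⟨n, ht0, htu⟩
      exact ⟨ht0, htu.trans (hu1 n).1.2⟩
  have happ : ∀ s : Set ℝ, MeasurableSet s →
      (volume.withDensity f) s = ∫⁻ t in s, f t := fun s hs => withDensity_apply f hs
  have hdir : Directed (fun x1 x2 => x1 ⊆ x2) (fun n => Ioo (0:ℝ) (u n)) := by
    intro m n
    rcases le_total (u m) (u n) with hmn | hmn
    · exact ⟨n, Ioo_subset_Ioo le_rfl hmn, subset_rfl⟩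
    · exact ⟨m, subset_rfl, Ioo_subset_Ioo le_rfl hmn⟩
  calc ∫⁻ t in Ioo 0 w, f t = (volume.withDensity f) (Ioo 0 w) :=
        (happ _ measurableSet_Ioo).symm
    _ = (volume.withDensity f) (⋃ n, Ioo 0 (u n)) := by rw [hUnion]
    _ = ⨆ n, (volume.withDensity f) (Ioo 0 (u n)) := hdir.measure_iUnion
    _ ≤ ⨆ u' ∈ Ioo 0 w \ N, ∫⁻ t in Ioo 0 u', f t := by
        refine iSup_le fun n => ?_
        rw [happ _ measurableSet_Ioo]
        exact le_iSup₂ (f := fun u' _ => ∫⁻ t in Ioo 0 u', f t) (u n) (hu1 n)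

lemma rightSup (f : ℝ → ℝ≥0∞) (hf : Measurable f) (w : ℝ) {N : Set ℝ}
    (hN : volume N = 0) :
    ∫⁻ t in Ioi w, f t ≤ ⨆ u ∈ Ioi w \ N, ∫⁻ t in Ioi u, f t := by
  have key : ∀ n : ℕ, ∃ u, u ∈ Ioo w (w + 1 / (n + 1)) \ N := by
    intro n
    apply nonempty_of_measure_ne_zero (μ := volume)
    rw [measure_diff_null hN, Real.volume_Ioo]
    simp only [ne_eq, ENNReal.ofReal_eq_zero, not_le]
    have : (0:ℝ) < 1 / (n + 1) := by positivity
    linarith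
  choose u hu using key
  have hu1 : ∀ n, u n ∈ Ioi w \ N := fun n => ⟨(hu n).1.1, (hu n).2⟩
  have hUnion : Ioi w = ⋃ n, Ioi (u n) := by
    ext t
    simp only [mem_iUnion, mem_Ioi]
    constructor
    · intro htw
      obtain ⟨n, hn⟩ : ∃ n : ℕ, w + 1 / ((n:ℝ) + 1) < t := by
        obtain ⟨n, hn⟩ := exists_nat_gt (1 / (t - w))
        refine ⟨n, ?_⟩
        have hwt : 0 < t - w := by linarith
        have h3 : 1 / (t - w) < (n:ℝ) + 1 := by
          have : (n:ℝ) ≤ n + 1 := by linarith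
          linarith
        have h4 : 1 / ((n:ℝ) + 1) < t - w := by
          rw [div_lt_iff₀ (by positivity)]
          rw [div_lt_iff₀ hwt] at h3
          nlinarith
        linarith
      exact ⟨n, lt_trans (hu n).1.2 hn⟩
    · rintro ⟨n, htu⟩
      exact lt_trans (hu1 n).1 htu
  have happ : ∀ s : Set ℝ, MeasurableSet s →
      (volume.withDensity f) s = ∫⁻ t in s, f t := fun s hs => withDensity_apply f hs
  have hdir : Directed (fun x1 x2 => x1 ⊆ x2) (fun n => Ioi (u n)) := by
    intro m n
    rcases le_total (u m) (u n) with hmn | hmn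
    · exact ⟨m, subset_rfl, Ioi_subset_Ioi hmn⟩
    · exact ⟨n, Ioi_subset_Ioi hmn, subset_rfl⟩
  calc ∫⁻ t in Ioi w, f t = (volume.withDensity f) (Ioi w) := (happ _ measurableSet_Ioi).symm
    _ = (volume.withDensity f) (⋃ n, Ioi (u n)) := by rw [hUnion]
    _ = ⨆ n, (volume.withDensity f) (Ioi (u n)) := hdir.measure_iUnion
    _ ≤ ⨆ u' ∈ Ioi w \ N, ∫⁻ t in Ioi u', f t := by
        refine iSup_le fun n => ?_
        rw [happ _ measurableSet_Ioi]
        exact le_iSup₂ (f := fun u' _ => ∫⁻ t in Ioi u', f t) (u n) (hu1 n)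

lemma infTail (f : ℝ → ℝ≥0∞) :
    (∀ ε : ℝ≥0∞, 0 < ε → ∃ w, 0 < w ∧ ∫⁻ t in Ioi w, f t ≤ ε) ∨
      (∀ w : ℝ, 0 < w → ∫⁻ t in Ioi w, f t = ⊤) := by
  by_cases hfin : ∃ w0 : ℝ, 0 < w0 ∧ ∫⁻ t in Ioi w0, f t ≠ ⊤
  · left
    obtain ⟨w0, hw0, hfin⟩ := hfin
    intro ε hε
    set ν := volume.withDensity f with hν
    have happ : ∀ s : Set ℝ, MeasurableSet s → ν s = ∫⁻ t in s, f t :=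
      fun s hs => withDensity_apply f hs
    have hinter : ⋂ n : ℕ, Ioi (w0 + (n:ℝ)) = (∅ : Set ℝ) := by
      ext t
      simp only [mem_iInter, mem_Ioi, mem_empty_iff_false, iff_false, not_forall, not_lt]
      obtain ⟨n, hn⟩ := exists_nat_gt (t - w0)
      exact ⟨n, by linarith⟩
    have heq : ν (⋂ n : ℕ, Ioi (w0 + (n:ℝ))) = ⨅ n : ℕ, ν (Ioi (w0 + (n:ℝ))) := by
      refine Directed.measure_iInter (fun n => measurableSet_Ioi.nullMeasurableSet)
        ?_ ⟨0, ?_⟩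
      · intro m n
        refine ⟨max m n, ?_, ?_⟩
        · exact Ioi_subset_Ioi (by simp [Nat.cast_le.mpr (le_max_left m n)])
        · exact Ioi_subset_Ioi (by simp [Nat.cast_le.mpr (le_max_right m n)])
      · rw [happ _ measurableSet_Ioi]
        refine ne_top_of_le_ne_top hfin (lintegral_mono_set ?_)
        exact Ioi_subset_Ioi (by simp)
    rw [hinter, measure_empty] at heq
    have hlt : ⨅ n : ℕ, ν (Ioi (w0 + (n:ℝ))) < ε := heq ▸ hε
    rw [iInf_lt_iff] at hlt
    obtain ⟨n, hn⟩ := hlt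
    refine ⟨w0 + n, by positivity, ?_⟩
    rw [← happ _ measurableSet_Ioi]
    exact hn.le
  · right
    push_neg at hfin
    exact hfin

lemma infHead (f : ℝ → ℝ≥0∞) :
    (∀ ε : ℝ≥0∞, 0 < ε → ∃ w, 0 < w ∧ ∫⁻ t in Ioo 0 w, f t ≤ ε) ∨
      (∀ w : ℝ, 0 < w → ∫⁻ t in Ioo 0 w, f t = ⊤) := by
  by_cases hfin : ∃ w0 : ℝ, 0 < w0 ∧ ∫⁻ t in Ioo 0 w0, f t ≠ ⊤
  · left
    obtain ⟨w0, hw0, hfin⟩ := hfin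
    intro ε hε
    set ν := volume.withDensity f with hν
    have happ : ∀ s : Set ℝ, MeasurableSet s → ν s = ∫⁻ t in s, f t :=
      fun s hs => withDensity_apply f hs
    have hmin : ∀ m n : ℕ, m ≤ n → min w0 (1 / ((n:ℝ) + 1)) ≤ min w0 (1 / ((m:ℝ) + 1)) := by
      intro m n hmn
      refine min_le_min le_rfl ?_
      have h1 : (0:ℝ) < (m:ℝ) + 1 := by positivity
      have h2 : (m:ℝ) + 1 ≤ (n:ℝ) + 1 := by
        have := (Nat.cast_le (α := ℝ)).mpr hmn
        linarith
      exact one_div_le_one_div_of_le h1 h2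
    have hinter : ⋂ n : ℕ, Ioo (0:ℝ) (min w0 (1 / ((n:ℝ) + 1))) = (∅ : Set ℝ) := by
      refine eq_empty_iff_forall_notMem.mpr fun t ht => ?_
      have h1 := mem_iInter.mp ht
      have ht0 : 0 < t := (h1 0).1
      obtain ⟨n, hn⟩ := exists_nat_gt (1 / t)
      have h3 : t < 1 / ((n:ℝ) + 1) := lt_of_lt_of_le (h1 n).2 (min_le_right _ _)
      rw [div_lt_iff₀ ht0] at hn
      rw [lt_div_iff₀ (by positivity)] at h3
      nlinarith
    have heq : ν (⋂ n : ℕ, Ioo (0:ℝ) (min w0 (1 / ((n:ℝ) + 1)))) =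
        ⨅ n : ℕ, ν (Ioo (0:ℝ) (min w0 (1 / ((n:ℝ) + 1)))) := by
      refine Directed.measure_iInter (fun n => measurableSet_Ioo.nullMeasurableSet)
        ?_ ⟨0, ?_⟩
      · intro m n
        refine ⟨max m n, ?_, ?_⟩
        · exact Ioo_subset_Ioo le_rfl (hmin m (max m n) (le_max_left m n))
        · exact Ioo_subset_Ioo le_rfl (hmin n (max m n) (le_max_right m n))
      · rw [happ _ measurableSet_Ioo]
        refine ne_top_of_le_ne_top hfin (lintegral_mono_set ?_)
        exact Ioo_subset_Ioo le_rfl (min_le_left _ _)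
    rw [hinter, measure_empty] at heq
    have hlt : ⨅ n : ℕ, ν (Ioo (0:ℝ) (min w0 (1 / ((n:ℝ) + 1)))) < ε := heq ▸ hε
    rw [iInf_lt_iff] at hlt
    obtain ⟨n, hn⟩ := hlt
    refine ⟨min w0 (1 / ((n:ℝ) + 1)), lt_min hw0 (by positivity), ?_⟩
    rw [← happ _ measurableSet_Ioo]
    exact hn.le
  · right
    push_neg at hfin
    exact hfin

lemma vanishTail (f : ℝ → ℝ≥0∞) (hf : Measurable f)
    (h : ∀ w : ℝ, 0 < w → ∫⁻ t in Ioi w, f t = 0) :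
    ∀ᵐ t ∂(volume.restrict (Ioi (0:ℝ))), f t = 0 := by
  have hUnion : Ioi (0:ℝ) = ⋃ n : ℕ, Ioi (1 / ((n:ℝ) + 1)) := by
    ext t
    simp only [mem_iUnion, mem_Ioi]
    constructor
    · intro ht
      obtain ⟨n, hn⟩ := exists_nat_gt (1 / t)
      refine ⟨n, ?_⟩
      rw [div_lt_iff₀ (by positivity)]
      rw [div_lt_iff₀ ht] at hn
      nlinarith
    · rintro ⟨n, hn⟩
      have : (0:ℝ) < 1 / ((n:ℝ) + 1) := by positivity
      linarith
  have happ : ∀ s : Set ℝ, MeasurableSet s → (volume.withDensity f) s = ∫⁻ t in s, f t :=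
    fun s hs => withDensity_apply f hs
  have hdir : Directed (fun x1 x2 => x1 ⊆ x2) (fun n : ℕ => Ioi ((1:ℝ) / ((n:ℝ) + 1))) := by
    intro m n
    rcases le_total ((1:ℝ) / ((m:ℝ) + 1)) (1 / ((n:ℝ) + 1)) with hmn | hmn
    · exact ⟨m, subset_rfl, Ioi_subset_Ioi hmn⟩
    · exact ⟨n, Ioi_subset_Ioi hmn, subset_rfl⟩
  have h0 : ∫⁻ t in Ioi (0:ℝ), f t = 0 := by
    rw [← happ _ measurableSet_Ioi, hUnion, hdir.measure_iUnion]
    refine iSup_eq_zero.mpr fun n => ?_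
    rw [happ _ measurableSet_Ioi, h _ (by positivity)]
  exact (lintegral_eq_zero_iff hf).mp h0

lemma vanishHead (f : ℝ → ℝ≥0∞) (hf : Measurable f)
    (h : ∀ w : ℝ, 0 < w → ∫⁻ t in Ioo 0 w, f t = 0) :
    ∀ᵐ t ∂(volume.restrict (Ioi (0:ℝ))), f t = 0 := by
  have hUnion : Ioi (0:ℝ) = ⋃ n : ℕ, Ioo (0:ℝ) ((n:ℝ) + 1) := by
    ext t
    simp only [mem_iUnion, mem_Ioo, mem_Ioi]
    constructor
    · intro ht
      obtain ⟨n, hn⟩ := exists_nat_gt t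
      exact ⟨n, ht, by linarith⟩
    · rintro ⟨n, hn, _⟩
      exact hn
  have happ : ∀ s : Set ℝ, MeasurableSet s → (volume.withDensity f) s = ∫⁻ t in s, f t :=
    fun s hs => withDensity_apply f hs
  have hdir : Directed (fun x1 x2 => x1 ⊆ x2) (fun n : ℕ => Ioo (0:ℝ) ((n:ℝ) + 1)) := by
    intro m n
    rcases le_total ((m:ℝ) + 1) ((n:ℝ) + 1) with hmn | hmn
    · exact ⟨n, Ioo_subset_Ioo le_rfl hmn, subset_rfl⟩
    · exact ⟨m, subset_rfl, Ioo_subset_Ioo le_rfl hmn⟩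
  have h0 : ∫⁻ t in Ioi (0:ℝ), f t = 0 := by
    rw [← happ _ measurableSet_Ioi, hUnion, hdir.measure_iUnion]
    refine iSup_eq_zero.mpr fun n => ?_
    rw [happ _ measurableSet_Ioo, h _ (by positivity)]
  exact (lintegral_eq_zero_iff hf).mp h0

lemma pairLe {p q : ℝ} (hp : 0 < p) (hq : 0 < q) {P Q u v S : ℝ≥0∞}
    (hPu : P ≤ 2 * u) (hQv : Q ≤ 2 * v) (hS : u ^ (1/p) * v ^ (1/q) ≤ S) :
    P ^ (1/p) * Q ^ (1/q) ≤ (2:ℝ≥0∞) ^ (1/p) * 2 ^ (1/q) * S := by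
  have h1 : P ^ (1/p) ≤ 2 ^ (1/p) * u ^ (1/p) := by
    calc P ^ (1/p) ≤ (2*u) ^ (1/p) := ENNReal.rpow_le_rpow hPu (by positivity)
    _ = 2 ^ (1/p) * u ^ (1/p) := ENNReal.mul_rpow_of_nonneg _ _ (by positivity)
  have h2 : Q ^ (1/q) ≤ 2 ^ (1/q) * v ^ (1/q) := by
    calc Q ^ (1/q) ≤ (2*v) ^ (1/q) := ENNReal.rpow_le_rpow hQv (by positivity)
    _ = 2 ^ (1/q) * v ^ (1/q) := ENNReal.mul_rpow_of_nonneg _ _ (by positivity)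
  calc P ^ (1/p) * Q ^ (1/q) ≤ (2 ^ (1/p) * u ^ (1/p)) * (2 ^ (1/q) * v ^ (1/q)) :=
        mul_le_mul' h1 h2
  _ = 2 ^ (1/p) * 2 ^ (1/q) * (u ^ (1/p) * v ^ (1/q)) := by ring
  _ ≤ 2 ^ (1/p) * 2 ^ (1/q) * S := mul_le_mul_right hS _

lemma core {α β : ℝ} (hα : 0 < α) (hβ : 0 < β) {r : ℝ≥0∞} (hr0 : r ≠ 0) (hrt : r ≠ ⊤)
    {G Gb H Ψ : ℝ → ℝ≥0∞} {P Q : ℝ≥0∞}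
    (hP : ∀ w : ℝ, 0 < w → P ≤ G w + r ^ β * Gb w)
    (hQ : ∀ w : ℝ, 0 < w → Q ≤ H w + r ^ (-α) * Ψ w)
    (hG : ∀ u v : ℝ, 0 < u → u ≤ v → G u ≤ G v)
    (hGb : ∀ u v : ℝ, 0 < u → u ≤ v → Gb v ≤ Gb u)
    (hH : ∀ u v : ℝ, 0 < u → u ≤ v → H v ≤ H u)
    (hΨ : ∀ u v : ℝ, 0 < u → u ≤ v → Ψ u ≤ Ψ v)
    (hGl : ∀ w : ℝ, 0 < w → G w ≤ ⨆ u ∈ Ioo (0:ℝ) w, G u)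
    (hHr : ∀ w : ℝ, 0 < w → H w ≤ ⨆ u ∈ Ioi w, H u)
    (hGbinf : (∀ ε : ℝ≥0∞, 0 < ε → ∃ w, 0 < w ∧ Gb w ≤ ε) ∨ ∀ w : ℝ, 0 < w → Gb w = ⊤)
    (hΨinf : (∀ ε : ℝ≥0∞, 0 < ε → ∃ w, 0 < w ∧ Ψ w ≤ ε) ∨ ∀ w : ℝ, 0 < w → Ψ w = ⊤)
    (hlink1 : (∀ w : ℝ, 0 < w → Gb w = 0) → ∀ w : ℝ, 0 < w → G w = 0)
    (hlink2 : (∀ w : ℝ, 0 < w → Ψ w = 0) → ∀ w : ℝ, 0 < w → H w = 0) :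
    P ^ (1/β) * Q ^ (1/α) ≤ (2:ℝ≥0∞) ^ (1/β) * 2 ^ (1/α) *
      ((⨆ w ∈ Ioi (0:ℝ), G w ^ (1/β) * H w ^ (1/α)) +
        ⨆ w ∈ Ioi (0:ℝ), Gb w ^ (1/β) * Ψ w ^ (1/α)) := by
  set D := ⨆ w ∈ Ioi (0:ℝ), G w ^ (1/β) * H w ^ (1/α) with hD
  set E := ⨆ w ∈ Ioi (0:ℝ), Gb w ^ (1/β) * Ψ w ^ (1/α) with hE
  set K := (2:ℝ≥0∞) ^ (1/β) * 2 ^ (1/α) with hK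
  have h2pos : (0:ℝ≥0∞) < 2 := by norm_num
  have h2top : (2:ℝ≥0∞) ≠ ⊤ := by norm_num
  have hK0 : K ≠ 0 := by
    refine mul_ne_zero ?_ ?_ <;> exact (ENNReal.rpow_pos h2pos h2top).ne'
  have hrβ0 : r ^ β ≠ 0 := by
    simp only [ne_eq, ENNReal.rpow_eq_zero_iff, not_or, not_and]
    exact ⟨fun h => absurd h hr0, fun h => absurd h hrt⟩
  have hrβt : r ^ β ≠ ⊤ := by
    simp only [ne_eq, ENNReal.rpow_eq_top_iff, not_or, not_and]
    exact ⟨fun h => absurd h hr0, fun h => absurd h hrt⟩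
  have hrα0 : r ^ (-α) ≠ 0 := by
    simp only [ne_eq, ENNReal.rpow_eq_zero_iff, not_or, not_and]
    exact ⟨fun h => absurd h hr0, fun h => absurd h hrt⟩
  have hrαt : r ^ (-α) ≠ ⊤ := by
    simp only [ne_eq, ENNReal.rpow_eq_top_iff, not_or, not_and]
    exact ⟨fun h => absurd h hr0, fun h => absurd h hrt⟩
  have hcanc : r ^ (-α) * (r ^ α * 1) = 1 := by
    rw [mul_one, ← ENNReal.rpow_add _ _ hr0 hrt, neg_add_cancel, ENNReal.rpow_zero]
  have hYmem : ∀ w : ℝ, 0 < w → r ^ β * Gb w ≤ G w → P ≤ 2 * G w := by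
    intro w hw hY
    refine (hP w hw).trans ?_
    rw [two_mul]
    exact add_le_add le_rfl hY
  have hYnot : ∀ w : ℝ, 0 < w → ¬(r ^ β * Gb w ≤ G w) → P ≤ 2 * (r ^ β * Gb w) := by
    intro w hw hY
    refine (hP w hw).trans ?_
    rw [two_mul]
    exact add_le_add (le_of_not_ge hY) le_rfl
  have hZmem : ∀ w : ℝ, 0 < w → Ψ w ≤ r ^ α * H w → Q ≤ 2 * H w := by
    intro w hw hZ
    refine (hQ w hw).trans ?_
    rw [two_mul]
    refine add_le_add le_rfl ?_
    calc r ^ (-α) * Ψ w ≤ r ^ (-α) * (r ^ α * H w) := mul_le_mul_right hZ _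
    _ = H w := by
        rw [← mul_assoc, ← ENNReal.rpow_add _ _ hr0 hrt, neg_add_cancel, ENNReal.rpow_zero,
          one_mul]
  have hZnot : ∀ w : ℝ, 0 < w → ¬(Ψ w ≤ r ^ α * H w) → Q ≤ 2 * (r ^ (-α) * Ψ w) := by
    intro w hw hZ
    refine (hQ w hw).trans ?_
    rw [two_mul]
    refine add_le_add ?_ le_rfl
    have h1 : r ^ α * H w ≤ Ψ w := le_of_not_ge hZ
    have h2 : H w = r ^ (-α) * (r ^ α * H w) := by
      rw [← mul_assoc, ← ENNReal.rpow_add _ _ hr0 hrt, neg_add_cancel, ENNReal.rpow_zero,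
        one_mul]
    rw [h2]
    exact mul_le_mul_right h1 _
  have hEeq : ∀ w : ℝ, (r ^ β * Gb w) ^ (1/β) * (r ^ (-α) * Ψ w) ^ (1/α) =
      Gb w ^ (1/β) * Ψ w ^ (1/α) := by
    intro w
    rw [ENNReal.mul_rpow_of_nonneg _ _ (by positivity : (0:ℝ) ≤ 1/β),
      ENNReal.mul_rpow_of_nonneg _ _ (by positivity : (0:ℝ) ≤ 1/α),
      ← ENNReal.rpow_mul r β, ← ENNReal.rpow_mul r (-α),
      mul_one_div, div_self hβ.ne', mul_one_div, neg_div, div_self hα.ne',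
      ENNReal.rpow_one, ENNReal.rpow_neg_one, mul_mul_mul_comm,
      ENNReal.mul_inv_cancel hr0 hrt, one_mul]
  have finD : ∀ w : ℝ, 0 < w → P ≤ 2 * G w → Q ≤ 2 * H w →
      P ^ (1/β) * Q ^ (1/α) ≤ K * (D + E) := by
    intro w hw hPw hQw
    refine pairLe hβ hα hPw hQw ?_
    refine le_trans ?_ le_self_add
    exact le_iSup₂ (f := fun w _ => G w ^ (1/β) * H w ^ (1/α)) w hw
  have finE : ∀ w : ℝ, 0 < w → P ≤ 2 * (r ^ β * Gb w) → Q ≤ 2 * (r ^ (-α) * Ψ w) →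
      P ^ (1/β) * Q ^ (1/α) ≤ K * (D + E) := by
    intro w hw hPw hQw
    refine pairLe hβ hα hPw hQw ?_
    rw [hEeq w]
    refine le_trans ?_ le_add_self
    exact le_iSup₂ (f := fun w _ => Gb w ^ (1/β) * Ψ w ^ (1/α)) w hw
  by_cases hc1 : ∃ w : ℝ, 0 < w ∧ (r ^ β * Gb w ≤ G w) ∧ (Ψ w ≤ r ^ α * H w)
  · obtain ⟨w, hw, hY, hZ⟩ := hc1
    exact finD w hw (hYmem w hw hY) (hZmem w hw hZ)
  by_cases hc2 : ∃ w : ℝ, 0 < w ∧ ¬(r ^ β * Gb w ≤ G w) ∧ ¬(Ψ w ≤ r ^ α * H w)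
  · obtain ⟨w, hw, hY, hZ⟩ := hc2
    exact finE w hw (hYnot w hw hY) (hZnot w hw hZ)
  push_neg at hc1 hc2
  -- hc1 : ∀ w, 0 < w → r^β*Gb w ≤ G w → ¬(Ψ w ≤ r^α*H w)
  -- hc2 : ∀ w, 0 < w → ¬(r^β*Gb w ≤ G w) → Ψ w ≤ r^α*H w
  by_cases hZe : ∃ z : ℝ, 0 < z ∧ Ψ z ≤ r ^ α * H z
  · by_cases hYe : ∃ y : ℝ, 0 < y ∧ r ^ β * Gb y ≤ G y
    · obtain ⟨y, hy0, hYy⟩ := hYe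
      obtain ⟨z, hz0, hZz⟩ := hZe
      set Zs : Set ℝ := {z | 0 < z ∧ Ψ z ≤ r ^ α * H z} with hZs
      have hZne : Zs.Nonempty := ⟨z, hz0, hZz⟩
      have hupY : ∀ u v : ℝ, 0 < u → u ≤ v → r ^ β * Gb u ≤ G u → r ^ β * Gb v ≤ G v := by
        intro u v hu huv hY
        calc r ^ β * Gb v ≤ r ^ β * Gb u := mul_le_mul_right (hGb u v hu huv) _
        _ ≤ G u := hY
        _ ≤ G v := hG u v hu huv
      have hdownZ : ∀ u v : ℝ, 0 < u → u ≤ v → Ψ v ≤ r ^ α * H v → Ψ u ≤ r ^ α * H u := by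
        intro u v hu huv hZ
        calc Ψ u ≤ Ψ v := hΨ u v hu huv
        _ ≤ r ^ α * H v := hZ
        _ ≤ r ^ α * H u := mul_le_mul_right (hH u v hu huv) _
      have hbdd : ∀ z' ∈ Zs, z' ≤ y := by
        intro z' hz'
        by_contra hlt
        push_neg at hlt
        exact absurd hz'.2 (not_le.mpr (hc1 z' hz'.1 (hupY y z' hy0 hlt.le hYy)))
      have hbddA : BddAbove Zs := ⟨y, fun x hx => hbdd x hx⟩
      set c := sSup Zs with hc
      have hc0 : 0 < c := lt_of_lt_of_le hz0 (le_csSup hbddA ⟨hz0, hZz⟩)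
      by_cases hcZ : Ψ c ≤ r ^ α * H c
      · -- c ∈ Z; every u > c is in Y
        have hQc : Q ^ (1/α) ≤ 2 ^ (1/α) * ((⨆ u ∈ Ioi c, H u) ^ (1/α)) := by
          calc Q ^ (1/α) ≤ (2 * H c) ^ (1/α) :=
                ENNReal.rpow_le_rpow (hZmem c hc0 hcZ) (by positivity)
          _ = 2 ^ (1/α) * H c ^ (1/α) := ENNReal.mul_rpow_of_nonneg _ _ (by positivity)
          _ ≤ 2 ^ (1/α) * ((⨆ u ∈ Ioi c, H u) ^ (1/α)) :=
                mul_le_mul_right (ENNReal.rpow_le_rpow (hHr c hc0) (by positivity)) _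
        have hsup : ((⨆ u ∈ Ioi c, H u) ^ (1/α)) ≤ ⨆ u ∈ Ioi c, H u ^ (1/α) :=
          supRpowLe H (by positivity)
        have hmain : P ^ (1/β) * (⨆ u ∈ Ioi c, H u ^ (1/α)) ≤ 2 ^ (1/β) * D := by
          rw [ENNReal.mul_iSup]
          refine iSup_le fun u => ?_
          rw [ENNReal.mul_iSup]
          refine iSup_le fun hu => ?_
          have huc : c < u := hu
          have hu0 : 0 < u := hc0.trans huc
          have hYu : r ^ β * Gb u ≤ G u := by
            by_contra hnot
            have hZu : Ψ u ≤ r ^ α * H u := hc2 u hu0 (not_le.mp hnot)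
            have : u ≤ c := le_csSup hbddA ⟨hu0, hZu⟩
            exact absurd huc (not_lt.mpr this)
          have hPu : P ^ (1/β) ≤ 2 ^ (1/β) * G u ^ (1/β) := by
            calc P ^ (1/β) ≤ (2 * G u) ^ (1/β) :=
                  ENNReal.rpow_le_rpow (hYmem u hu0 hYu) (by positivity)
            _ = 2 ^ (1/β) * G u ^ (1/β) := ENNReal.mul_rpow_of_nonneg _ _ (by positivity)
          calc P ^ (1/β) * H u ^ (1/α) ≤ 2 ^ (1/β) * G u ^ (1/β) * H u ^ (1/α) :=
                mul_le_mul_left hPu _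
          _ = 2 ^ (1/β) * (G u ^ (1/β) * H u ^ (1/α)) := mul_assoc _ _ _
          _ ≤ 2 ^ (1/β) * D :=
                mul_le_mul_right (le_iSup₂ (f := fun w _ => G w ^ (1/β) * H w ^ (1/α)) u hu0) _
        calc P ^ (1/β) * Q ^ (1/α)
            ≤ P ^ (1/β) * (2 ^ (1/α) * ⨆ u ∈ Ioi c, H u ^ (1/α)) :=
              mul_le_mul_right (hQc.trans (mul_le_mul_right hsup _)) _
        _ = 2 ^ (1/α) * (P ^ (1/β) * ⨆ u ∈ Ioi c, H u ^ (1/α)) := by ring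
        _ ≤ 2 ^ (1/α) * (2 ^ (1/β) * D) := mul_le_mul_right hmain _
        _ = K * D := by rw [hK]; ring
        _ ≤ K * (D + E) := mul_le_mul_right le_self_add _
      · -- c ∈ Y; every u ∈ (0,c) is in Z
        have hYc : r ^ β * Gb c ≤ G c := by
          by_contra hnot
          exact hcZ (hc2 c hc0 (not_le.mp hnot))
        have hPc : P ^ (1/β) ≤ 2 ^ (1/β) * ((⨆ u ∈ Ioo (0:ℝ) c, G u) ^ (1/β)) := by
          calc P ^ (1/β) ≤ (2 * G c) ^ (1/β) :=
                ENNReal.rpow_le_rpow (hYmem c hc0 hYc) (by positivity)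
          _ = 2 ^ (1/β) * G c ^ (1/β) := ENNReal.mul_rpow_of_nonneg _ _ (by positivity)
          _ ≤ 2 ^ (1/β) * ((⨆ u ∈ Ioo (0:ℝ) c, G u) ^ (1/β)) :=
                mul_le_mul_right (ENNReal.rpow_le_rpow (hGl c hc0) (by positivity)) _
        have hsup : ((⨆ u ∈ Ioo (0:ℝ) c, G u) ^ (1/β)) ≤ ⨆ u ∈ Ioo (0:ℝ) c, G u ^ (1/β) :=
          supRpowLe G (by positivity)
        have hmain : (⨆ u ∈ Ioo (0:ℝ) c, G u ^ (1/β)) * Q ^ (1/α) ≤ 2 ^ (1/α) * D := by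
          rw [ENNReal.iSup_mul]
          refine iSup_le fun u => ?_
          rw [ENNReal.iSup_mul]
          refine iSup_le fun hu => ?_
          have hu0 : 0 < u := hu.1
          have hZu : Ψ u ≤ r ^ α * H u := by
            obtain ⟨z', hz', huz'⟩ := exists_lt_of_lt_csSup hZne hu.2
            exact hdownZ u z' hu0 huz'.le hz'.2
          have hQu : Q ^ (1/α) ≤ 2 ^ (1/α) * H u ^ (1/α) := by
            calc Q ^ (1/α) ≤ (2 * H u) ^ (1/α) :=
                  ENNReal.rpow_le_rpow (hZmem u hu0 hZu) (by positivity)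
            _ = 2 ^ (1/α) * H u ^ (1/α) := ENNReal.mul_rpow_of_nonneg _ _ (by positivity)
          calc G u ^ (1/β) * Q ^ (1/α) ≤ G u ^ (1/β) * (2 ^ (1/α) * H u ^ (1/α)) :=
                mul_le_mul_right hQu _
          _ = 2 ^ (1/α) * (G u ^ (1/β) * H u ^ (1/α)) := by ring
          _ ≤ 2 ^ (1/α) * D :=
                mul_le_mul_right (le_iSup₂ (f := fun w _ => G w ^ (1/β) * H w ^ (1/α)) u hu0) _
        calc P ^ (1/β) * Q ^ (1/α)
            ≤ (2 ^ (1/β) * ⨆ u ∈ Ioo (0:ℝ) c, G u ^ (1/β)) * Q ^ (1/α) :=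
              mul_le_mul_left (hPc.trans (mul_le_mul_right hsup _)) _
        _ = 2 ^ (1/β) * ((⨆ u ∈ Ioo (0:ℝ) c, G u ^ (1/β)) * Q ^ (1/α)) := by ring
        _ ≤ 2 ^ (1/β) * (2 ^ (1/α) * D) := mul_le_mul_right hmain _
        _ = K * D := by rw [hK]; ring
        _ ≤ K * (D + E) := mul_le_mul_right le_self_add _
    · -- Y is empty
      have hYall : ∀ w : ℝ, 0 < w → P ≤ 2 * (r ^ β * Gb w) := fun w hw =>
        hYnot w hw fun hY => hYe ⟨w, hw, hY⟩
      rcases hGbinf with hsmall | htop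
      · have h2rβ0 : 2 * r ^ β ≠ 0 := mul_ne_zero (by norm_num) hrβ0
        have h2rβt : 2 * r ^ β ≠ ⊤ := ENNReal.mul_ne_top h2top hrβt
        have hP0 : P = 0 := by
          refine le_antisymm ?_ zero_le
          refine ENNReal.le_of_forall_pos_le_add fun ε hε _ => ?_
          obtain ⟨w, hw, hGbw⟩ := hsmall ((2 * r ^ β)⁻¹ * ε)
            (ENNReal.mul_pos (ENNReal.inv_ne_zero.mpr h2rβt) (by exact_mod_cast hε.ne'))
          calc P ≤ 2 * (r ^ β * Gb w) := hYall w hw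
          _ = (2 * r ^ β) * Gb w := by ring
          _ ≤ (2 * r ^ β) * ((2 * r ^ β)⁻¹ * ε) := mul_le_mul_right hGbw _
          _ = ε := by rw [← mul_assoc, ENNReal.mul_inv_cancel h2rβ0 h2rβt, one_mul]
          _ ≤ 0 + ε := by rw [zero_add]
        rw [hP0, ENNReal.zero_rpow_of_pos (by positivity), zero_mul]
        exact zero_le
      · by_cases hΨ0 : ∀ w : ℝ, 0 < w → Ψ w = 0
        · have hH0 := hlink2 hΨ0
          have hQ0 : Q = 0 := by
            have h1 := hQ 1 one_pos
            rw [hH0 1 one_pos, hΨ0 1 one_pos, mul_zero, add_zero] at h1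
            exact le_zero_iff.mp h1
          rw [hQ0, ENNReal.zero_rpow_of_pos (by positivity), mul_zero]
          exact zero_le
        · push_neg at hΨ0
          obtain ⟨w, hw, hΨw⟩ := hΨ0
          have hterm : Gb w ^ (1/β) * Ψ w ^ (1/α) = ⊤ := by
            rw [htop w hw, ENNReal.top_rpow_of_pos (by positivity)]
            rw [ENNReal.top_mul]
            simp only [ne_eq, ENNReal.rpow_eq_zero_iff, not_or, not_and, not_lt]
            exact ⟨fun h => absurd h hΨw, fun _ => by positivity⟩
          have hEtop : E = ⊤ := by
            refine top_le_iff.mp ?_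
            rw [← hterm]
            exact le_iSup₂ (f := fun w _ => Gb w ^ (1/β) * Ψ w ^ (1/α)) w hw
          rw [hEtop, add_top, ENNReal.mul_top hK0]
          exact le_top
  · -- Z is empty
    have hZall : ∀ w : ℝ, 0 < w → Q ≤ 2 * (r ^ (-α) * Ψ w) := fun w hw =>
      hZnot w hw fun hZ => hZe ⟨w, hw, hZ⟩
    rcases hΨinf with hsmall | htop
    · have h2rα0 : 2 * r ^ (-α) ≠ 0 := mul_ne_zero (by norm_num) hrα0
      have h2rαt : 2 * r ^ (-α) ≠ ⊤ := ENNReal.mul_ne_top h2top hrαt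
      have hQ0 : Q = 0 := by
        refine le_antisymm ?_ zero_le
        refine ENNReal.le_of_forall_pos_le_add fun ε hε _ => ?_
        obtain ⟨w, hw, hΨw⟩ := hsmall ((2 * r ^ (-α))⁻¹ * ε)
          (ENNReal.mul_pos (ENNReal.inv_ne_zero.mpr h2rαt) (by exact_mod_cast hε.ne'))
        calc Q ≤ 2 * (r ^ (-α) * Ψ w) := hZall w hw
        _ = (2 * r ^ (-α)) * Ψ w := by ring
        _ ≤ (2 * r ^ (-α)) * ((2 * r ^ (-α))⁻¹ * ε) := mul_le_mul_right hΨw _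
        _ = ε := by rw [← mul_assoc, ENNReal.mul_inv_cancel h2rα0 h2rαt, one_mul]
        _ ≤ 0 + ε := by rw [zero_add]
      rw [hQ0, ENNReal.zero_rpow_of_pos (by positivity), mul_zero]
      exact zero_le
    · by_cases hGb0 : ∀ w : ℝ, 0 < w → Gb w = 0
      · have hG0 := hlink1 hGb0
        have hP0 : P = 0 := by
          have h1 := hP 1 one_pos
          rw [hG0 1 one_pos, hGb0 1 one_pos, mul_zero, add_zero] at h1
          exact le_zero_iff.mp h1
        rw [hP0, ENNReal.zero_rpow_of_pos (by positivity), zero_mul]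
        exact zero_le
      · push_neg at hGb0
        obtain ⟨w, hw, hGbw⟩ := hGb0
        have hterm : Gb w ^ (1/β) * Ψ w ^ (1/α) = ⊤ := by
          rw [htop w hw, ENNReal.top_rpow_of_pos (by positivity)]
          rw [ENNReal.mul_top]
          simp only [ne_eq, ENNReal.rpow_eq_zero_iff, not_or, not_and, not_lt]
          exact ⟨fun h => absurd h hGbw, fun _ => by positivity⟩
        have hEtop : E = ⊤ := by
          refine top_le_iff.mp ?_
          rw [← hterm]
          exact le_iSup₂ (f := fun w _ => Gb w ^ (1/β) * Ψ w ^ (1/α)) w hw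
        rw [hEtop, add_top, ENNReal.mul_top hK0]
        exact le_top

lemma supProdLe (f : ℝ → ℝ≥0∞) (hf : Measurable f) {p : ℝ} (hp : 0 < p) (R : ℝ → ℝ≥0∞)
    (hR : ∀ u w : ℝ, 0 < u → u ≤ w → R w ≤ R u) :
    (⨆ w ∈ Ioi (0:ℝ), (∫⁻ t in Ioo 0 w, f t) ^ p * R w) ≤
      essSup (fun w => (∫⁻ t in Ioo 0 w, f t) ^ p * R w) (volume.restrict (Ioi (0:ℝ))) := by
  set F := fun w => (∫⁻ t in Ioo (0:ℝ) w, f t) ^ p * R w with hF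
  set T := essSup F (volume.restrict (Ioi (0:ℝ))) with hT
  have hae : ∀ᵐ w ∂(volume.restrict (Ioi (0:ℝ))), F w ≤ T := ENNReal.ae_le_essSup F
  rw [ae_restrict_iff' measurableSet_Ioi] at hae
  have hNnull : volume {w : ℝ | ¬(w ∈ Ioi (0:ℝ) → F w ≤ T)} = 0 := hae
  refine iSup₂_le fun w hw => ?_
  have hw0 : (0:ℝ) < w := hw
  have h1 : (∫⁻ t in Ioo (0:ℝ) w, f t) ≤
      ⨆ u ∈ Ioo (0:ℝ) w \ {w : ℝ | ¬(w ∈ Ioi (0:ℝ) → F w ≤ T)}, ∫⁻ t in Ioo (0:ℝ) u, f t :=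
    leftSup f hf hw0 hNnull
  calc (∫⁻ t in Ioo (0:ℝ) w, f t) ^ p * R w
      ≤ ((⨆ u ∈ Ioo (0:ℝ) w \ {w : ℝ | ¬(w ∈ Ioi (0:ℝ) → F w ≤ T)},
          ∫⁻ t in Ioo (0:ℝ) u, f t) ^ p) * R w :=
        mul_le_mul_left (ENNReal.rpow_le_rpow h1 hp.le) _
  _ ≤ (⨆ u ∈ Ioo (0:ℝ) w \ {w : ℝ | ¬(w ∈ Ioi (0:ℝ) → F w ≤ T)},
        (∫⁻ t in Ioo (0:ℝ) u, f t) ^ p) * R w :=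
        mul_le_mul_left (supRpowLe _ hp) _
  _ = ⨆ u ∈ Ioo (0:ℝ) w \ {w : ℝ | ¬(w ∈ Ioi (0:ℝ) → F w ≤ T)},
        ((∫⁻ t in Ioo (0:ℝ) u, f t) ^ p * R w) := by
        simp only [ENNReal.iSup_mul]
  _ ≤ T := by
        refine iSup₂_le fun u hu => ?_
        have hu0 : 0 < u := hu.1.1
        have huw : u ≤ w := hu.1.2.le
        have h3 : (∫⁻ t in Ioo (0:ℝ) u, f t) ^ p * R w ≤ F u :=
          mul_le_mul_right (hR u w hu0 huw) _
        have h4 : F u ≤ T := by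
          have h5 := hu.2
          simp only [mem_setOf_eq, not_not] at h5
          exact h5 hu0
        exact h3.trans h4

lemma supProdLe' (f : ℝ → ℝ≥0∞) (hf : Measurable f) {p : ℝ} (hp : 0 < p) (R : ℝ → ℝ≥0∞)
    (hR : ∀ u w : ℝ, 0 < u → u ≤ w → R w ≤ R u) :
    (⨆ w ∈ Ioi (0:ℝ), R w * (∫⁻ t in Ioo 0 w, f t) ^ p) ≤
      essSup (fun w => R w * (∫⁻ t in Ioo 0 w, f t) ^ p) (volume.restrict (Ioi (0:ℝ))) := by
  set F := fun w => R w * (∫⁻ t in Ioo (0:ℝ) w, f t) ^ p with hF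
  set T := essSup F (volume.restrict (Ioi (0:ℝ))) with hT
  have hae : ∀ᵐ w ∂(volume.restrict (Ioi (0:ℝ))), F w ≤ T := ENNReal.ae_le_essSup F
  rw [ae_restrict_iff' measurableSet_Ioi] at hae
  have hNnull : volume {w : ℝ | ¬(w ∈ Ioi (0:ℝ) → F w ≤ T)} = 0 := hae
  refine iSup₂_le fun w hw => ?_
  have hw0 : (0:ℝ) < w := hw
  have h1 : (∫⁻ t in Ioo (0:ℝ) w, f t) ≤
      ⨆ u ∈ Ioo (0:ℝ) w \ {w : ℝ | ¬(w ∈ Ioi (0:ℝ) → F w ≤ T)}, ∫⁻ t in Ioo (0:ℝ) u, f t :=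
    leftSup f hf hw0 hNnull
  calc R w * (∫⁻ t in Ioo (0:ℝ) w, f t) ^ p
      ≤ R w * ((⨆ u ∈ Ioo (0:ℝ) w \ {w : ℝ | ¬(w ∈ Ioi (0:ℝ) → F w ≤ T)},
          ∫⁻ t in Ioo (0:ℝ) u, f t) ^ p) :=
        mul_le_mul_right (ENNReal.rpow_le_rpow h1 hp.le) _
  _ ≤ R w * ⨆ u ∈ Ioo (0:ℝ) w \ {w : ℝ | ¬(w ∈ Ioi (0:ℝ) → F w ≤ T)},
        (∫⁻ t in Ioo (0:ℝ) u, f t) ^ p :=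
        mul_le_mul_right (supRpowLe _ hp) _
  _ = ⨆ u ∈ Ioo (0:ℝ) w \ {w : ℝ | ¬(w ∈ Ioi (0:ℝ) → F w ≤ T)},
        (R w * (∫⁻ t in Ioo (0:ℝ) u, f t) ^ p) := by
        simp only [ENNReal.mul_iSup]
  _ ≤ T := by
        refine iSup₂_le fun u hu => ?_
        have hu0 : 0 < u := hu.1.1
        have huw : u ≤ w := hu.1.2.le
        have h3 : R w * (∫⁻ t in Ioo (0:ℝ) u, f t) ^ p ≤ F u :=
          mul_le_mul_left (hR u w hu0 huw) _
        have h4 : F u ≤ T := by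
          have h5 := hu.2
          simp only [mem_setOf_eq, not_not] at h5
          exact h5 hu0
        exact h3.trans h4

/-- Gluing lemma (Lemma 2.7): for `α, β > 0`, a nondecreasing weight `a` on `(0,∞)` and
nonnegative measurable `g, h`, with `𝒜(x,t) = a x / (a x + a t)`,
`esssup_x (∫_0^∞ 𝒜(x,t)^β g)^{1/β} (∫_0^∞ 𝒜(t,x)^α h)^{1/α}
  ≈ esssup_x (∫_0^x g)^{1/β} (∫_x^∞ h)^{1/α}
    + esssup_x (∫_x^∞ a^{-β} g)^{1/β} (∫_0^x a^α h)^{1/α}`,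
with equivalence constants depending only on `α` and `β`. -/
theorem gluing_integral_integral (α β : ℝ) (hα : 0 < α) (hβ : 0 < β) :
    ∃ c C : ℝ≥0∞, 0 < c ∧ c < ∞ ∧ 0 < C ∧ C < ∞ ∧
      ∀ a g h : ℝ → ℝ≥0∞, Measurable a → Measurable g → Measurable h →
        MonotoneOn a (Ioi 0) →
        (∀ᵐ x ∂(volume.restrict (Ioi (0:ℝ))), 0 < a x ∧ a x < ∞) →
        let A := essSup (fun x =>
            (∫⁻ t in Ioi (0:ℝ), (a x / (a x + a t)) ^ β * g t) ^ (1 / β) *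
            (∫⁻ t in Ioi (0:ℝ), (a t / (a t + a x)) ^ α * h t) ^ (1 / α))
          (volume.restrict (Ioi (0:ℝ)))
        let B := essSup (fun x =>
              (∫⁻ t in Ioo (0:ℝ) x, g t) ^ (1 / β) * (∫⁻ t in Ioi x, h t) ^ (1 / α))
            (volume.restrict (Ioi (0:ℝ)))
          + essSup (fun x =>
              (∫⁻ t in Ioi x, a t ^ (-β) * g t) ^ (1 / β) *
              (∫⁻ t in Ioo (0:ℝ) x, a t ^ α * h t) ^ (1 / α))
            (volume.restrict (Ioi (0:ℝ)))
        c * B ≤ A ∧ A ≤ C * B := by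
  have h1β : (0:ℝ) < 1 / β := by positivity
  have h1α : (0:ℝ) < 1 / α := by positivity
  have h2ne0 : (2:ℝ≥0∞) ≠ 0 := by norm_num
  have h2net : (2:ℝ≥0∞) ≠ ⊤ := by norm_num
  have hK0 : ((2:ℝ≥0∞) ^ (1 / β) * 2 ^ (1 / α)) ≠ 0 :=
    mul_ne_zero (ENNReal.rpow_pos (by norm_num) h2net).ne' (ENNReal.rpow_pos (by norm_num) h2net).ne'
  refine ⟨(8:ℝ≥0∞)⁻¹, (2:ℝ≥0∞) ^ (1 / β) * 2 ^ (1 / α), ?_, ?_, ?_, ?_, ?_⟩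
  · exact ENNReal.inv_pos.mpr (by norm_num)
  · exact ENNReal.inv_lt_top.mpr (by norm_num)
  · exact zero_lt_iff.mpr hK0
  · exact mul_lt_top (ENNReal.rpow_lt_top_of_nonneg h1β.le h2net)
      (ENNReal.rpow_lt_top_of_nonneg h1α.le h2net)
  intro a g h ha hg hh hmono hae
  intro A B
  have mAg : Measurable fun t => a t ^ (-β) * g t := by fun_prop
  have mAh : Measurable fun t => a t ^ α * h t := by fun_prop
  set μ := volume.restrict (Ioi (0:ℝ)) with hμ
  set Af : ℝ → ℝ≥0∞ := fun x =>
      (∫⁻ t in Ioi (0:ℝ), (a x / (a x + a t)) ^ β * g t) ^ (1 / β) *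
      (∫⁻ t in Ioi (0:ℝ), (a t / (a t + a x)) ^ α * h t) ^ (1 / α) with hAf
  set B1f : ℝ → ℝ≥0∞ := fun x =>
      (∫⁻ t in Ioo (0:ℝ) x, g t) ^ (1 / β) * (∫⁻ t in Ioi x, h t) ^ (1 / α) with hB1f
  set B2f : ℝ → ℝ≥0∞ := fun x =>
      (∫⁻ t in Ioi x, a t ^ (-β) * g t) ^ (1 / β) *
      (∫⁻ t in Ioo (0:ℝ) x, a t ^ α * h t) ^ (1 / α) with hB2f
  have hAeq : A = essSup Af μ := rfl
  have hBeq : B = essSup B1f μ + essSup B2f μ := rfl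
  constructor
  · -- lower bound
    have key_lower : ∀ᵐ x ∂μ, B1f x ≤ 4 * Af x ∧ B2f x ≤ 4 * Af x := by
      filter_upwards [hae, ae_restrict_mem measurableSet_Ioi] with x hax hx0
      have hax0 : a x ≠ 0 := hax.1.ne'
      have haxt : a x ≠ ⊤ := hax.2.ne
      have aePos : ∀ᵐ t ∂(volume.restrict (Ioi x)), 0 < a t ∧ a t < ⊤ :=
        ae_restrict_of_ae_restrict_of_subset (Ioi_subset_Ioi (le_of_lt hx0)) hae
      -- lower bounds for the first factor
      have lg : (2:ℝ≥0∞) ^ (-β) * ∫⁻ t in Ioo (0:ℝ) x, g t ≤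
          ∫⁻ t in Ioi (0:ℝ), (a x / (a x + a t)) ^ β * g t := by
        rw [← lintegral_const_mul _ hg]
        refine le_trans (lintegral_mono_ae ?_) (lintegral_mono_set Ioo_subset_Ioi_self)
        filter_upwards [ae_restrict_mem measurableSet_Ioo] with t ht
        refine mul_le_mul_left ?_ _
        have hat : a t ≤ a x := hmono ht.1 hx0 ht.2.le
        have hden : a x + a t ≤ 2 * a x := by rw [two_mul]; exact add_le_add le_rfl hat
        have hdiv : (2:ℝ≥0∞)⁻¹ ≤ a x / (a x + a t) := by
          have h1 : a x / (2 * a x) ≤ a x / (a x + a t) := ENNReal.div_le_div_left hden _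
          have h2 : a x / (2 * a x) = 2⁻¹ := by
            rw [show a x / (2 * a x) = 1 * a x / (2 * a x) by rw [one_mul],
              ENNReal.mul_div_mul_right 1 2 hax0 haxt, one_div]
          rwa [h2] at h1
        calc (2:ℝ≥0∞) ^ (-β) = ((2:ℝ≥0∞)⁻¹) ^ β := by
              rw [show (-β) = -1 * β by ring, ENNReal.rpow_mul, ENNReal.rpow_neg_one]
        _ ≤ (a x / (a x + a t)) ^ β := ENNReal.rpow_le_rpow hdiv hβ.le
      have lh : (2:ℝ≥0∞) ^ (-α) * ∫⁻ t in Ioi x, h t ≤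
          ∫⁻ t in Ioi (0:ℝ), (a t / (a t + a x)) ^ α * h t := by
        rw [← lintegral_const_mul _ hh]
        refine le_trans (lintegral_mono_ae ?_) (lintegral_mono_set (Ioi_subset_Ioi (le_of_lt hx0)))
        filter_upwards [ae_restrict_mem measurableSet_Ioi, aePos] with t ht hatp
        refine mul_le_mul_left ?_ _
        have hat : a x ≤ a t := hmono hx0 (mem_Ioi.mpr (lt_trans hx0 ht)) (le_of_lt ht)
        have hden : a t + a x ≤ 2 * a t := by rw [two_mul]; exact add_le_add le_rfl hat
        have hdiv : (2:ℝ≥0∞)⁻¹ ≤ a t / (a t + a x) := by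
          have h1 : a t / (2 * a t) ≤ a t / (a t + a x) := ENNReal.div_le_div_left hden _
          have h2 : a t / (2 * a t) = 2⁻¹ := by
            rw [show a t / (2 * a t) = 1 * a t / (2 * a t) by rw [one_mul],
              ENNReal.mul_div_mul_right 1 2 hatp.1.ne' hatp.2.ne, one_div]
          rwa [h2] at h1
        calc (2:ℝ≥0∞) ^ (-α) = ((2:ℝ≥0∞)⁻¹) ^ α := by
              rw [show (-α) = -1 * α by ring, ENNReal.rpow_mul, ENNReal.rpow_neg_one]
        _ ≤ (a t / (a t + a x)) ^ α := ENNReal.rpow_le_rpow hdiv hα.le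
      have lg2 : (2:ℝ≥0∞) ^ (-β) * a x ^ β * ∫⁻ t in Ioi x, a t ^ (-β) * g t ≤
          ∫⁻ t in Ioi (0:ℝ), (a x / (a x + a t)) ^ β * g t := by
        rw [← lintegral_const_mul _ mAg]
        refine le_trans (lintegral_mono_ae ?_) (lintegral_mono_set (Ioi_subset_Ioi (le_of_lt hx0)))
        filter_upwards [ae_restrict_mem measurableSet_Ioi, aePos] with t ht hatp
        have hat : a x ≤ a t := hmono hx0 (mem_Ioi.mpr (lt_trans hx0 ht)) (le_of_lt ht)
        have hden : a x + a t ≤ 2 * a t := by rw [two_mul]; exact add_le_add hat le_rfl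
        have hdiv : a x / (2 * a t) ≤ a x / (a x + a t) := ENNReal.div_le_div_left hden _
        have h2β0 : ((2:ℝ≥0∞)) ^ β ≠ 0 := (ENNReal.rpow_pos (by norm_num) h2net).ne'
        have h2βt : ((2:ℝ≥0∞)) ^ β ≠ ⊤ := (ENNReal.rpow_lt_top_of_nonneg hβ.le h2net).ne
        have hkey : (2:ℝ≥0∞) ^ (-β) * a x ^ β * a t ^ (-β) = (a x / (2 * a t)) ^ β := by
          rw [ENNReal.rpow_neg, ENNReal.rpow_neg, ENNReal.div_rpow_of_nonneg _ _ hβ.le,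
            ENNReal.mul_rpow_of_nonneg _ _ hβ.le, div_eq_mul_inv,
            ENNReal.mul_inv (Or.inl h2β0) (Or.inl h2βt)]
          ring
        calc (2:ℝ≥0∞) ^ (-β) * a x ^ β * (a t ^ (-β) * g t)
            = ((2:ℝ≥0∞) ^ (-β) * a x ^ β * a t ^ (-β)) * g t := by ring
        _ = (a x / (2 * a t)) ^ β * g t := by rw [hkey]
        _ ≤ (a x / (a x + a t)) ^ β * g t :=
            mul_le_mul_left (ENNReal.rpow_le_rpow hdiv hβ.le) _
      have lh2 : (2:ℝ≥0∞) ^ (-α) * a x ^ (-α) * ∫⁻ t in Ioo (0:ℝ) x, a t ^ α * h t ≤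
          ∫⁻ t in Ioi (0:ℝ), (a t / (a t + a x)) ^ α * h t := by
        rw [← lintegral_const_mul _ mAh]
        refine le_trans (lintegral_mono_ae ?_) (lintegral_mono_set Ioo_subset_Ioi_self)
        filter_upwards [ae_restrict_mem measurableSet_Ioo] with t ht
        have hat : a t ≤ a x := hmono ht.1 hx0 ht.2.le
        have hden : a t + a x ≤ 2 * a x := by rw [two_mul]; exact add_le_add hat le_rfl
        have hdiv : a t / (2 * a x) ≤ a t / (a t + a x) := ENNReal.div_le_div_left hden _
        have h2α0 : ((2:ℝ≥0∞)) ^ α ≠ 0 := (ENNReal.rpow_pos (by norm_num) h2net).ne'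
        have h2αt : ((2:ℝ≥0∞)) ^ α ≠ ⊤ := (ENNReal.rpow_lt_top_of_nonneg hα.le h2net).ne
        have hkey : (2:ℝ≥0∞) ^ (-α) * a x ^ (-α) * a t ^ α = (a t / (2 * a x)) ^ α := by
          rw [ENNReal.rpow_neg, ENNReal.rpow_neg, ENNReal.div_rpow_of_nonneg _ _ hα.le,
            ENNReal.mul_rpow_of_nonneg _ _ hα.le, div_eq_mul_inv,
            ENNReal.mul_inv (Or.inl h2α0) (Or.inl h2αt)]
          ring
        calc (2:ℝ≥0∞) ^ (-α) * a x ^ (-α) * (a t ^ α * h t)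
            = ((2:ℝ≥0∞) ^ (-α) * a x ^ (-α) * a t ^ α) * h t := by ring
        _ = (a t / (2 * a x)) ^ α * h t := by rw [hkey]
        _ ≤ (a t / (a t + a x)) ^ α * h t :=
            mul_le_mul_left (ENNReal.rpow_le_rpow hdiv hα.le) _
      -- take rpow's
      have e2β : ((2:ℝ≥0∞) ^ (-β)) ^ (1/β) = 2⁻¹ := by
        rw [← ENNReal.rpow_mul, show -β * (1/β) = -1 by rw [mul_one_div, neg_div, div_self hβ.ne'],
          ENNReal.rpow_neg_one]
      have e2α : ((2:ℝ≥0∞) ^ (-α)) ^ (1/α) = 2⁻¹ := by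
        rw [← ENNReal.rpow_mul, show -α * (1/α) = -1 by rw [mul_one_div, neg_div, div_self hα.ne'],
          ENNReal.rpow_neg_one]
      have eaxβ : (a x ^ β) ^ (1/β) = a x := by
        rw [← ENNReal.rpow_mul, show β * (1/β) = 1 by rw [mul_one_div, div_self hβ.ne'],
          ENNReal.rpow_one]
      have eaxα : (a x ^ (-α)) ^ (1/α) = (a x)⁻¹ := by
        rw [← ENNReal.rpow_mul, show -α * (1/α) = -1 by rw [mul_one_div, neg_div, div_self hα.ne'],
          ENNReal.rpow_neg_one]
      have lgr : 2⁻¹ * (∫⁻ t in Ioo (0:ℝ) x, g t) ^ (1/β) ≤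
          (∫⁻ t in Ioi (0:ℝ), (a x / (a x + a t)) ^ β * g t) ^ (1/β) := by
        have h1 := ENNReal.rpow_le_rpow lg h1β.le
        rwa [ENNReal.mul_rpow_of_nonneg _ _ h1β.le, e2β] at h1
      have lhr : 2⁻¹ * (∫⁻ t in Ioi x, h t) ^ (1/α) ≤
          (∫⁻ t in Ioi (0:ℝ), (a t / (a t + a x)) ^ α * h t) ^ (1/α) := by
        have h1 := ENNReal.rpow_le_rpow lh h1α.le
        rwa [ENNReal.mul_rpow_of_nonneg _ _ h1α.le, e2α] at h1
      have lgr2 : 2⁻¹ * (a x * (∫⁻ t in Ioi x, a t ^ (-β) * g t) ^ (1/β)) ≤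
          (∫⁻ t in Ioi (0:ℝ), (a x / (a x + a t)) ^ β * g t) ^ (1/β) := by
        have h1 := ENNReal.rpow_le_rpow lg2 h1β.le
        rwa [ENNReal.mul_rpow_of_nonneg _ _ h1β.le, ENNReal.mul_rpow_of_nonneg _ _ h1β.le,
          e2β, eaxβ, mul_assoc] at h1
      have lhr2 : 2⁻¹ * ((a x)⁻¹ * (∫⁻ t in Ioo (0:ℝ) x, a t ^ α * h t) ^ (1/α)) ≤
          (∫⁻ t in Ioi (0:ℝ), (a t / (a t + a x)) ^ α * h t) ^ (1/α) := by
        have h1 := ENNReal.rpow_le_rpow lh2 h1α.le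
        rwa [ENNReal.mul_rpow_of_nonneg _ _ h1α.le, ENNReal.mul_rpow_of_nonneg _ _ h1α.le,
          e2α, eaxα, mul_assoc] at h1
      have double : ∀ u v : ℝ≥0∞, 2⁻¹ * u ≤ v → u ≤ 2 * v := by
        intro u v huv
        have := mul_le_mul_right huv (2:ℝ≥0∞)
        rwa [← mul_assoc, ENNReal.mul_inv_cancel h2ne0 h2net, one_mul] at this
      constructor
      · calc B1f x = (∫⁻ t in Ioo (0:ℝ) x, g t) ^ (1/β) * (∫⁻ t in Ioi x, h t) ^ (1/α) := rfl
        _ ≤ (2 * (∫⁻ t in Ioi (0:ℝ), (a x / (a x + a t)) ^ β * g t) ^ (1/β)) *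
            (2 * (∫⁻ t in Ioi (0:ℝ), (a t / (a t + a x)) ^ α * h t) ^ (1/α)) :=
              mul_le_mul' (double _ _ lgr) (double _ _ lhr)
        _ = 4 * Af x := by simp only [hAf]; rw [mul_mul_mul_comm]; norm_num
      · have heq : B2f x = (a x * (∫⁻ t in Ioi x, a t ^ (-β) * g t) ^ (1/β)) *
            ((a x)⁻¹ * (∫⁻ t in Ioo (0:ℝ) x, a t ^ α * h t) ^ (1/α)) := by
          rw [hB2f, mul_mul_mul_comm, ENNReal.mul_inv_cancel hax0 haxt, one_mul]
        calc B2f x = (a x * (∫⁻ t in Ioi x, a t ^ (-β) * g t) ^ (1/β)) *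
            ((a x)⁻¹ * (∫⁻ t in Ioo (0:ℝ) x, a t ^ α * h t) ^ (1/α)) := heq
        _ ≤ (2 * (∫⁻ t in Ioi (0:ℝ), (a x / (a x + a t)) ^ β * g t) ^ (1/β)) *
            (2 * (∫⁻ t in Ioi (0:ℝ), (a t / (a t + a x)) ^ α * h t) ^ (1/α)) :=
              mul_le_mul' (double _ _ lgr2) (double _ _ lhr2)
        _ = 4 * Af x := by simp only [hAf]; rw [mul_mul_mul_comm]; norm_num
    have s1 : essSup B1f μ ≤ 4 * essSup Af μ := by
      refine le_trans (essSup_mono_ae (key_lower.mono fun x hx => hx.1)) ?_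
      refine essSup_le_of_ae_le _ ?_
      filter_upwards [ENNReal.ae_le_essSup Af (μ := μ)] with x hx
      exact mul_le_mul_right hx _
    have s2 : essSup B2f μ ≤ 4 * essSup Af μ := by
      refine le_trans (essSup_mono_ae (key_lower.mono fun x hx => hx.2)) ?_
      refine essSup_le_of_ae_le _ ?_
      filter_upwards [ENNReal.ae_le_essSup Af (μ := μ)] with x hx
      exact mul_le_mul_right hx _
    rw [hAeq, hBeq]
    calc (8:ℝ≥0∞)⁻¹ * (essSup B1f μ + essSup B2f μ)
        ≤ (8:ℝ≥0∞)⁻¹ * (4 * essSup Af μ + 4 * essSup Af μ) :=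
          mul_le_mul_right (add_le_add s1 s2) _
    _ = (8:ℝ≥0∞)⁻¹ * (8 * essSup Af μ) := by
        rw [← add_mul, show ((4:ℝ≥0∞) + 4) = 8 by norm_num]
    _ = essSup Af μ := by
        rw [← mul_assoc, ENNReal.inv_mul_cancel (by norm_num) (by norm_num), one_mul]
  · -- upper bound
    have hDle : (⨆ w ∈ Ioi (0:ℝ),
        (∫⁻ t in Ioo (0:ℝ) w, g t) ^ (1/β) * (∫⁻ t in Ioi w, h t) ^ (1/α)) ≤ essSup B1f μ := by
      refine supProdLe g hg h1β (fun w => (∫⁻ t in Ioi w, h t) ^ (1/α)) ?_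
      intro u w hu huw
      exact ENNReal.rpow_le_rpow (lintegral_mono_set (Ioi_subset_Ioi huw)) h1α.le
    have hEle : (⨆ w ∈ Ioi (0:ℝ),
        (∫⁻ t in Ioi w, a t ^ (-β) * g t) ^ (1/β) *
          (∫⁻ t in Ioo (0:ℝ) w, a t ^ α * h t) ^ (1/α)) ≤ essSup B2f μ := by
      refine supProdLe' (fun t => a t ^ α * h t) mAh h1α
        (fun w => (∫⁻ t in Ioi w, a t ^ (-β) * g t) ^ (1/β)) ?_
      intro u w hu huw
      exact ENNReal.rpow_le_rpow (lintegral_mono_set (Ioi_subset_Ioi huw)) h1β.le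
    have key_upper : ∀ᵐ x ∂μ, Af x ≤
        (2:ℝ≥0∞) ^ (1/β) * 2 ^ (1/α) * (essSup B1f μ + essSup B2f μ) := by
      filter_upwards [hae, ae_restrict_mem measurableSet_Ioi] with x hax hx0
      have hax0 : a x ≠ 0 := hax.1.ne'
      have haxt : a x ≠ ⊤ := hax.2.ne
      have hcore := core hα hβ hax0 haxt
        (G := fun w => ∫⁻ t in Ioo (0:ℝ) w, g t)
        (Gb := fun w => ∫⁻ t in Ioi w, a t ^ (-β) * g t)
        (H := fun w => ∫⁻ t in Ioi w, h t)
        (Ψ := fun w => ∫⁻ t in Ioo (0:ℝ) w, a t ^ α * h t)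
        (P := ∫⁻ t in Ioi (0:ℝ), (a x / (a x + a t)) ^ β * g t)
        (Q := ∫⁻ t in Ioi (0:ℝ), (a t / (a t + a x)) ^ α * h t)
        ?_ ?_ ?_ ?_ ?_ ?_ ?_ ?_ ?_ ?_ ?_ ?_
      · exact hcore.trans (mul_le_mul_right (add_le_add hDle hEle) _)
      · -- hP
        intro w hw
        have hsub : Ioi (0:ℝ) ⊆ Ioo 0 w ∪ Ici w := by
          intro t ht
          rcases lt_or_ge t w with h' | h'
          · exact Or.inl ⟨ht, h'⟩
          · exact Or.inr h'
        calc ∫⁻ t in Ioi (0:ℝ), (a x / (a x + a t)) ^ β * g t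
            ≤ ∫⁻ t in Ioo (0:ℝ) w ∪ Ici w, (a x / (a x + a t)) ^ β * g t :=
              lintegral_mono_set hsub
        _ ≤ (∫⁻ t in Ioo (0:ℝ) w, (a x / (a x + a t)) ^ β * g t) +
              ∫⁻ t in Ici w, (a x / (a x + a t)) ^ β * g t := lintegral_union_le _ _ _
        _ ≤ (∫⁻ t in Ioo (0:ℝ) w, g t) + a x ^ β * ∫⁻ t in Ioi w, a t ^ (-β) * g t := by
            refine add_le_add ?_ ?_
            · refine lintegral_mono fun t => ?_
              have hle1 : a x / (a x + a t) ≤ 1 :=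
                le_trans (ENNReal.div_le_div_right le_self_add _) ENNReal.div_self_le_one
              calc (a x / (a x + a t)) ^ β * g t ≤ 1 ^ β * g t :=
                    mul_le_mul_left (ENNReal.rpow_le_rpow hle1 hβ.le) _
              _ = g t := by rw [ENNReal.one_rpow, one_mul]
            · rw [setLIntegral_congr (μ := volume) (Ioi_ae_eq_Ici (a := w)).symm,
                ← lintegral_const_mul _ mAg]
              refine lintegral_mono fun t => ?_
              have hd : a x / (a x + a t) ≤ a x / a t := ENNReal.div_le_div_left le_add_self _
              have hkey : (a x / a t) ^ β = a x ^ β * a t ^ (-β) := by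
                rw [ENNReal.div_rpow_of_nonneg _ _ hβ.le, div_eq_mul_inv, ENNReal.rpow_neg]
              calc (a x / (a x + a t)) ^ β * g t ≤ (a x / a t) ^ β * g t :=
                    mul_le_mul_left (ENNReal.rpow_le_rpow hd hβ.le) _
              _ = a x ^ β * (a t ^ (-β) * g t) := by rw [hkey, mul_assoc]
      · -- hQ
        intro w hw
        have hsub : Ioi (0:ℝ) ⊆ Ioo 0 w ∪ Ici w := by
          intro t ht
          rcases lt_or_ge t w with h' | h'
          · exact Or.inl ⟨ht, h'⟩
          · exact Or.inr h'
        calc ∫⁻ t in Ioi (0:ℝ), (a t / (a t + a x)) ^ α * h t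
            ≤ ∫⁻ t in Ioo (0:ℝ) w ∪ Ici w, (a t / (a t + a x)) ^ α * h t :=
              lintegral_mono_set hsub
        _ ≤ (∫⁻ t in Ioo (0:ℝ) w, (a t / (a t + a x)) ^ α * h t) +
              ∫⁻ t in Ici w, (a t / (a t + a x)) ^ α * h t := lintegral_union_le _ _ _
        _ ≤ (a x ^ (-α) * ∫⁻ t in Ioo (0:ℝ) w, a t ^ α * h t) + ∫⁻ t in Ioi w, h t := by
            refine add_le_add ?_ ?_
            · rw [← lintegral_const_mul _ mAh]
              refine lintegral_mono fun t => ?_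
              have hd : a t / (a t + a x) ≤ a t / a x := ENNReal.div_le_div_left le_add_self _
              have hkey : (a t / a x) ^ α = a t ^ α * a x ^ (-α) := by
                rw [ENNReal.div_rpow_of_nonneg _ _ hα.le, div_eq_mul_inv, ENNReal.rpow_neg]
              calc (a t / (a t + a x)) ^ α * h t ≤ (a t / a x) ^ α * h t :=
                    mul_le_mul_left (ENNReal.rpow_le_rpow hd hα.le) _
              _ = a x ^ (-α) * (a t ^ α * h t) := by rw [hkey]; ring
            · rw [setLIntegral_congr (μ := volume) (Ioi_ae_eq_Ici (a := w)).symm]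
              refine lintegral_mono fun t => ?_
              have hle1 : a t / (a t + a x) ≤ 1 :=
                le_trans (ENNReal.div_le_div_right le_self_add _) ENNReal.div_self_le_one
              calc (a t / (a t + a x)) ^ α * h t ≤ 1 ^ α * h t :=
                    mul_le_mul_left (ENNReal.rpow_le_rpow hle1 hα.le) _
              _ = h t := by rw [ENNReal.one_rpow, one_mul]
        _ = (∫⁻ t in Ioi w, h t) + a x ^ (-α) * ∫⁻ t in Ioo (0:ℝ) w, a t ^ α * h t :=
            add_comm _ _
      · exact fun u v hu huv => lintegral_mono_set (Ioo_subset_Ioo le_rfl huv)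
      · exact fun u v hu huv => lintegral_mono_set (Ioi_subset_Ioi huv)
      · exact fun u v hu huv => lintegral_mono_set (Ioi_subset_Ioi huv)
      · exact fun u v hu huv => lintegral_mono_set (Ioo_subset_Ioo le_rfl huv)
      · intro w hw
        have := leftSup g hg hw (N := ∅) (by simp)
        simpa using this
      · intro w hw
        have := rightSup h hh w (N := ∅) (by simp)
        simpa using this
      · exact infTail (fun t => a t ^ (-β) * g t)
      · exact infHead (fun t => a t ^ α * h t)
      · -- hlink1
        intro h0 w hw
        have hz := vanishTail _ mAg h0
        have hg0 : ∀ᵐ t ∂(volume.restrict (Ioi (0:ℝ))), g t = 0 := by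
          filter_upwards [hz, hae] with t h1 h2
          rcases mul_eq_zero.mp h1 with h3 | h3
          · exfalso
            rw [ENNReal.rpow_eq_zero_iff] at h3
            rcases h3 with ⟨h4, _⟩ | ⟨h4, _⟩
            · exact h2.1.ne' h4
            · exact h2.2.ne h4
          · exact h3
        have hg0' : ∀ᵐ t ∂(volume.restrict (Ioo (0:ℝ) w)), g t = 0 :=
          ae_restrict_of_ae_restrict_of_subset Ioo_subset_Ioi_self hg0
        calc ∫⁻ t in Ioo (0:ℝ) w, g t = ∫⁻ _ in Ioo (0:ℝ) w, 0 := lintegral_congr_ae hg0'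
        _ = 0 := lintegral_zero
      · -- hlink2
        intro h0 w hw
        have hz := vanishHead _ mAh h0
        have hh0 : ∀ᵐ t ∂(volume.restrict (Ioi (0:ℝ))), h t = 0 := by
          filter_upwards [hz, hae] with t h1 h2
          rcases mul_eq_zero.mp h1 with h3 | h3
          · exfalso
            rw [ENNReal.rpow_eq_zero_iff] at h3
            rcases h3 with ⟨h4, _⟩ | ⟨h4, _⟩
            · exact h2.1.ne' h4
            · exact h2.2.ne h4
          · exact h3
        have hh0' : ∀ᵐ t ∂(volume.restrict (Ioi w)), h t = 0 :=
          ae_restrict_of_ae_restrict_of_subset (Ioi_subset_Ioi (le_of_lt hw)) hh0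
        calc ∫⁻ t in Ioi w, h t = ∫⁻ _ in Ioi w, 0 := lintegral_congr_ae hh0'
        _ = 0 := lintegral_zero
    rw [hAeq, hBeq]
    exact essSup_le_of_ae_le _ key_upper
end

section
/- Let 0 < p₁, p₂, q₁, q₂ < ∞, let v₁, v₂ be weights on (0,∞), let u₁ ∈ Ω̃_{q₁} and u₂ ∈ Ω_{q₂}. Then for every nonnegative measurable function f on (0,∞), ‖f‖_{M(Cop_{p₁,q₁}(u₁,v₁), Ces_{p₂,q₂}(u₂,v₂))} = ( ‖f^{p₁}‖_{M( Cop_{q₁/p₁}(u₁^{p₁}), Ces_{p₂/p₁, q₂/p₁}(u₂^{p₁}, v₁^{−p₁} v₂^{p₁}) )} )^{1/p₁}. -/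
open MeasureTheory ENNReal Set Filter

/-- `‖f‖_{p,s}`: the Lebesgue functional `(∫_s f^p)^{1/p}` for `p < ∞`,
and `esssup_s f` for `p = ∞`. -/
noncomputable def wNorm (p : ℝ≥0∞) (f : ℝ → ℝ≥0∞) (s : Set ℝ) : ℝ≥0∞ :=
  if p = ∞ then essSup f (volume.restrict s)
  else (∫⁻ x in s, f x ^ p.toReal) ^ (1 / p.toReal)

/-- The weighted Cesàro functional `‖f‖_{Ces_{p,q}(u,v)} = ‖ t ↦ ‖f‖_{p,v,(0,t)} ‖_{q,u,(0,∞)}`. -/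
noncomputable def cesaroNorm (p q : ℝ≥0∞) (u v : ℝ → ℝ≥0∞) (f : ℝ → ℝ≥0∞) : ℝ≥0∞ :=
  wNorm q (fun t => wNorm p (fun x => f x * v x) (Ioo 0 t) * u t) (Ioi 0)

/-- The weighted Copson functional `‖f‖_{Cop_{p,q}(u,v)} = ‖ t ↦ ‖f‖_{p,v,(t,∞)} ‖_{q,u,(0,∞)}`. -/
noncomputable def copsonNorm (p q : ℝ≥0∞) (u v : ℝ → ℝ≥0∞) (f : ℝ → ℝ≥0∞) : ℝ≥0∞ :=
  wNorm q (fun t => wNorm p (fun x => f x * v x) (Ioi t) * u t) (Ioi 0)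

/-- The multiplier functional `‖f‖_{M(X,Y)} = sup { ‖f·g‖_Y / ‖g‖_X :
g nonnegative measurable, g not a.e. zero on (0,∞) }`. -/
noncomputable def multNorm (X Y : (ℝ → ℝ≥0∞) → ℝ≥0∞) (f : ℝ → ℝ≥0∞) : ℝ≥0∞ :=
  ⨆ (g : ℝ → ℝ≥0∞) (_ : Measurable g ∧
      ¬ (∀ᵐ x ∂(volume.restrict (Ioi (0:ℝ))), g x = 0)),
    Y (fun x => f x * g x) / X g

/-- A weight on `(0,∞)`: measurable, positive and finite a.e. on `(0,∞)`. -/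
def IsWeightOn (v : ℝ → ℝ≥0∞) : Prop :=
  Measurable v ∧ ∀ᵐ x ∂(volume.restrict (Ioi (0:ℝ))), 0 < v x ∧ v x < ∞

/-- `u ∈ Ω_q`: `0 < ‖u‖_{q,(t,∞)} < ∞` for all `t > 0`. -/
def MemOmega (q : ℝ≥0∞) (u : ℝ → ℝ≥0∞) : Prop :=
  Measurable u ∧ ∀ t : ℝ, 0 < t → 0 < wNorm q u (Ioi t) ∧ wNorm q u (Ioi t) < ∞

/-- `u ∈ Ω̃_q`: `0 < ‖u‖_{q,(0,t)} < ∞` for all `t > 0`. -/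
def MemOmegaDual (q : ℝ≥0∞) (u : ℝ → ℝ≥0∞) : Prop :=
  Measurable u ∧ ∀ t : ℝ, 0 < t → 0 < wNorm q u (Ioo 0 t) ∧ wNorm q u (Ioo 0 t) < ∞

/-- The exponent `p'`: `p/(1−p)` if `p < 1`, `∞` if `p = 1`, `p/(p−1)` if `p > 1`. -/
noncomputable def dualExp (p : ℝ) : ℝ≥0∞ :=
  if p < 1 then ENNReal.ofReal (p / (1 - p))
  else if p = 1 then ∞
  else ENNReal.ofReal (p / (p - 1))

/-- An admissible function: continuous and strictly increasing on `[0,∞)`,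
vanishing at `0` and tending to `∞` at `∞`. -/
def AdmissibleFn (U : ℝ → ℝ≥0∞) : Prop :=
  ContinuousOn U (Ici 0) ∧ StrictMonoOn U (Ici 0) ∧ U 0 = 0 ∧
    Tendsto U atTop (nhds ∞)

/-- φ is equivalent to ψ on `(0,∞)` up to multiplicative constants. -/
def EquivOn (φ ψ : ℝ → ℝ≥0∞) : Prop :=
  ∃ c C : ℝ≥0∞, 0 < c ∧ C < ∞ ∧ ∀ x ∈ Ioi (0:ℝ), c * ψ x ≤ φ x ∧ φ x ≤ C * ψ x

/-- `φ ∈ Q_U`: φ is non-degenerate and `U`-quasiconcave, i.e. φ is equivalent to a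
nondecreasing function on `(0,∞)`, `φ/U` is equivalent to a nonincreasing function on
`(0,∞)`, and `lim_{t→0+} φ(t) = lim_{t→∞} 1/φ(t) = lim_{t→∞} φ(t)/U(t)
= lim_{t→0+} U(t)/φ(t) = 0`. -/
def MemQClass (U φ : ℝ → ℝ≥0∞) : Prop :=
  (∃ ψ : ℝ → ℝ≥0∞, MonotoneOn ψ (Ioi 0) ∧ EquivOn φ ψ) ∧
  (∃ ψ : ℝ → ℝ≥0∞, AntitoneOn ψ (Ioi 0) ∧ EquivOn (fun x => φ x / U x) ψ) ∧
  Tendsto φ (nhdsWithin 0 (Ioi 0)) (nhds 0) ∧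
  Tendsto (fun t => (φ t)⁻¹) atTop (nhds 0) ∧
  Tendsto (fun t => φ t / U t) atTop (nhds 0) ∧
  Tendsto (fun t => U t / φ t) (nhdsWithin 0 (Ioi 0)) (nhds 0)

section AuxMultRed

lemma wNorm_ofReal_aux {p : ℝ} (hp : 0 < p) (f : ℝ → ℝ≥0∞) (s : Set ℝ) :
    wNorm (ENNReal.ofReal p) f s = (∫⁻ x in s, f x ^ p) ^ (1 / p) := by
  rw [wNorm, if_neg ENNReal.ofReal_ne_top, ENNReal.toReal_ofReal hp.le]

lemma wNorm_one_aux (f : ℝ → ℝ≥0∞) (s : Set ℝ) :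
    wNorm 1 f s = ∫⁻ x in s, f x := by
  simp [wNorm, ENNReal.one_ne_top]

lemma wNorm_congr_ae_aux {p : ℝ≥0∞} {f g : ℝ → ℝ≥0∞} {s : Set ℝ}
    (hfg : f =ᵐ[volume.restrict s] g) : wNorm p f s = wNorm p g s := by
  unfold wNorm
  split
  · exact essSup_congr_ae hfg
  · congr 1
    exact lintegral_congr_ae (hfg.mono fun x hx => by simp only [hx])

lemma copsonNorm_congr_aux (p q : ℝ≥0∞) (u v : ℝ → ℝ≥0∞) {h₁ h₂ : ℝ → ℝ≥0∞}
    (h : h₁ =ᵐ[volume.restrict (Ioi (0:ℝ))] h₂) :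
    copsonNorm p q u v h₁ = copsonNorm p q u v h₂ := by
  unfold copsonNorm
  refine wNorm_congr_ae_aux ?_
  filter_upwards [ae_restrict_mem measurableSet_Ioi] with t ht
  have h' : (fun x => h₁ x * v x) =ᵐ[volume.restrict (Ioi t)] (fun x => h₂ x * v x) :=
    (ae_restrict_of_ae_restrict_of_subset (Ioi_subset_Ioi ht.le) h).mono fun x hx => by
      simp only [hx]
  rw [wNorm_congr_ae_aux h']

lemma cesaroNorm_congr_aux (p q : ℝ≥0∞) (u v : ℝ → ℝ≥0∞) {h₁ h₂ : ℝ → ℝ≥0∞}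
    (h : h₁ =ᵐ[volume.restrict (Ioi (0:ℝ))] h₂) :
    cesaroNorm p q u v h₁ = cesaroNorm p q u v h₂ := by
  unfold cesaroNorm
  refine wNorm_congr_ae_aux ?_
  filter_upwards [ae_restrict_mem measurableSet_Ioi] with t _
  have h' : (fun x => h₁ x * v x) =ᵐ[volume.restrict (Ioo 0 t)] (fun x => h₂ x * v x) :=
    (ae_restrict_of_ae_restrict_of_subset Ioo_subset_Ioi_self h).mono fun x hx => by
      simp only [hx]
  rw [wNorm_congr_ae_aux h']

end AuxMultRed

/-- Proposition 3.1: reduction of the multiplier problem between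
`Cop_{p₁,q₁}(u₁,v₁)` and `Ces_{p₂,q₂}(u₂,v₂)` to three parameters and three weights. -/
theorem multiplier_reduction (p₁ p₂ q₁ q₂ : ℝ)
    (hp₁ : 0 < p₁) (hp₂ : 0 < p₂) (hq₁ : 0 < q₁) (hq₂ : 0 < q₂)
    (u₁ u₂ v₁ v₂ : ℝ → ℝ≥0∞) (hv₁ : IsWeightOn v₁) (hv₂ : IsWeightOn v₂)
    (hu₁ : MemOmegaDual (ENNReal.ofReal q₁) u₁)
    (hu₂ : MemOmega (ENNReal.ofReal q₂) u₂)
    (f : ℝ → ℝ≥0∞) (hf : Measurable f) :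
    multNorm (copsonNorm (ENNReal.ofReal p₁) (ENNReal.ofReal q₁) u₁ v₁)
        (cesaroNorm (ENNReal.ofReal p₂) (ENNReal.ofReal q₂) u₂ v₂) f
      = (multNorm
          (copsonNorm 1 (ENNReal.ofReal (q₁ / p₁)) (fun x => u₁ x ^ p₁) (fun _ => 1))
          (cesaroNorm (ENNReal.ofReal (p₂ / p₁)) (ENNReal.ofReal (q₂ / p₁))
            (fun x => u₂ x ^ p₁) (fun x => v₁ x ^ (-p₁) * v₂ x ^ p₁))
          (fun x => f x ^ p₁)) ^ (1 / p₁) := by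
  -- X-side identity
  have hXp : ∀ g : ℝ → ℝ≥0∞,
      copsonNorm 1 (ENNReal.ofReal (q₁ / p₁)) (fun x => u₁ x ^ p₁) (fun _ => 1)
        (fun x => (g x * v₁ x) ^ p₁)
      = (copsonNorm (ENNReal.ofReal p₁) (ENNReal.ofReal q₁) u₁ v₁ g) ^ p₁ := by
    intro g
    unfold copsonNorm
    rw [wNorm_ofReal_aux (div_pos hq₁ hp₁), wNorm_ofReal_aux hq₁, ← ENNReal.rpow_mul,
      show (1 / q₁ * p₁ : ℝ) = 1 / (q₁ / p₁) by
        rw [one_div_mul_eq_div, one_div_div]]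
    congr 1
    refine lintegral_congr fun t => ?_
    rw [wNorm_one_aux, wNorm_ofReal_aux hp₁]
    simp only [mul_one]
    rw [ENNReal.mul_rpow_of_nonneg _ _ (by positivity : (0:ℝ) ≤ q₁ / p₁),
      ENNReal.mul_rpow_of_nonneg _ _ hq₁.le, ← ENNReal.rpow_mul, ← ENNReal.rpow_mul,
      show (1 / p₁ * q₁ : ℝ) = q₁ / p₁ by rw [one_div_mul_eq_div],
      show (p₁ * (q₁ / p₁) : ℝ) = q₁ by field_simp]
  -- Y-side identity
  have hYp : ∀ g : ℝ → ℝ≥0∞,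
      cesaroNorm (ENNReal.ofReal (p₂ / p₁)) (ENNReal.ofReal (q₂ / p₁))
        (fun x => u₂ x ^ p₁) (fun x => v₁ x ^ (-p₁) * v₂ x ^ p₁)
        (fun x => f x ^ p₁ * (g x * v₁ x) ^ p₁)
      = (cesaroNorm (ENNReal.ofReal p₂) (ENNReal.ofReal q₂) u₂ v₂ (fun x => f x * g x)) ^ p₁ := by
    intro g
    unfold cesaroNorm
    rw [wNorm_ofReal_aux (div_pos hq₂ hp₁), wNorm_ofReal_aux hq₂, ← ENNReal.rpow_mul,
      show (1 / q₂ * p₁ : ℝ) = 1 / (q₂ / p₁) by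
        rw [one_div_mul_eq_div, one_div_div]]
    congr 1
    refine lintegral_congr fun t => ?_
    rw [wNorm_ofReal_aux (div_pos hp₂ hp₁), wNorm_ofReal_aux hp₂]
    have hAB : (∫⁻ x in Ioo (0:ℝ) t,
        ((f x ^ p₁ * (g x * v₁ x) ^ p₁) * (v₁ x ^ (-p₁) * v₂ x ^ p₁)) ^ (p₂ / p₁))
        = ∫⁻ x in Ioo (0:ℝ) t, ((f x * g x) * v₂ x) ^ p₂ := by
      refine lintegral_congr_ae ?_
      filter_upwards [ae_restrict_of_ae_restrict_of_subset Ioo_subset_Ioi_self hv₁.2]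
        with x hx
      have h0 : v₁ x ≠ 0 := hx.1.ne'
      have htp : v₁ x ≠ ∞ := hx.2.ne
      have key : v₁ x ^ p₁ * v₁ x ^ (-p₁) = 1 := by
        rw [← ENNReal.rpow_add _ _ h0 htp, add_neg_cancel, ENNReal.rpow_zero]
      calc (f x ^ p₁ * (g x * v₁ x) ^ p₁ * (v₁ x ^ (-p₁) * v₂ x ^ p₁)) ^ (p₂ / p₁)
          = ((f x * g x * v₂ x) ^ p₁ * (v₁ x ^ p₁ * v₁ x ^ (-p₁))) ^ (p₂ / p₁) := by
            rw [ENNReal.mul_rpow_of_nonneg (g x) (v₁ x) hp₁.le,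
              ENNReal.mul_rpow_of_nonneg (f x * g x) (v₂ x) hp₁.le,
              ENNReal.mul_rpow_of_nonneg (f x) (g x) hp₁.le]
            congr 1
            ring
        _ = (f x * g x * v₂ x) ^ p₂ := by
            rw [key, mul_one, ← ENNReal.rpow_mul,
              show (p₁ * (p₂ / p₁) : ℝ) = p₂ by field_simp]
    rw [hAB]
    rw [ENNReal.mul_rpow_of_nonneg _ _ (by positivity : (0:ℝ) ≤ q₂ / p₁),
      ENNReal.mul_rpow_of_nonneg _ _ hq₂.le, ← ENNReal.rpow_mul, ← ENNReal.rpow_mul,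
      ← ENNReal.rpow_mul,
      show (1 / (p₂ / p₁) * (q₂ / p₁) : ℝ) = 1 / p₂ * q₂ by
        rw [one_div_div]; field_simp,
      show (p₁ * (q₂ / p₁) : ℝ) = q₂ by field_simp]
  -- the ratio identity
  have hterm : ∀ g : ℝ → ℝ≥0∞,
      cesaroNorm (ENNReal.ofReal p₂) (ENNReal.ofReal q₂) u₂ v₂ (fun x => f x * g x) /
        copsonNorm (ENNReal.ofReal p₁) (ENNReal.ofReal q₁) u₁ v₁ g
      = (cesaroNorm (ENNReal.ofReal (p₂ / p₁)) (ENNReal.ofReal (q₂ / p₁))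
            (fun x => u₂ x ^ p₁) (fun x => v₁ x ^ (-p₁) * v₂ x ^ p₁)
            (fun x => f x ^ p₁ * (g x * v₁ x) ^ p₁) /
          copsonNorm 1 (ENNReal.ofReal (q₁ / p₁)) (fun x => u₁ x ^ p₁) (fun _ => 1)
            (fun x => (g x * v₁ x) ^ p₁)) ^ (1 / p₁) := by
    intro g
    rw [hYp g, hXp g, ← ENNReal.div_rpow_of_nonneg _ _ hp₁.le, ← ENNReal.rpow_mul,
      mul_one_div_cancel hp₁.ne', ENNReal.rpow_one]
  -- measurability helper
  have hrpm : ∀ (φ : ℝ → ℝ≥0∞) (c : ℝ), Measurable φ → Measurable fun x => φ x ^ c :=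
    fun φ c hφ => ENNReal.continuous_rpow_const.measurable.comp hφ
  unfold multNorm
  refine le_antisymm (iSup₂_le fun g hg => ?_) ?_
  · rw [hterm g]
    refine ENNReal.rpow_le_rpow ?_ (by positivity)
    refine le_iSup₂_of_le (fun x => (g x * v₁ x) ^ p₁) ⟨hrpm _ _ (hg.1.mul hv₁.1), ?_⟩ le_rfl
    intro hae
    apply hg.2
    filter_upwards [hae, hv₁.2] with x h0 hx
    rcases ENNReal.rpow_eq_zero_iff.1 h0 with ⟨hm, _⟩ | ⟨_, hneg⟩
    · rcases mul_eq_zero.1 hm with h | h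
      · exact h
      · exact absurd h hx.1.ne'
    · linarith
  · rw [← ENNReal.rpow_le_rpow_iff hp₁, ← ENNReal.rpow_mul,
      one_div_mul_cancel hp₁.ne', ENNReal.rpow_one]
    refine iSup₂_le fun h hh => ?_
    set g : ℝ → ℝ≥0∞ := fun x => h x ^ (1 / p₁) * (v₁ x)⁻¹ with hgdef
    have hgm : Measurable g := (hrpm _ _ hh.1).mul hv₁.1.inv
    have hgne : ¬ ∀ᵐ x ∂(volume.restrict (Ioi (0:ℝ))), g x = 0 := by
      intro hae
      apply hh.2
      filter_upwards [hae, hv₁.2] with x h0 hx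
      rcases mul_eq_zero.1 h0 with h' | h'
      · rcases ENNReal.rpow_eq_zero_iff.1 h' with ⟨h'', _⟩ | ⟨_, hneg⟩
        · exact h''
        · exfalso
          have : (0:ℝ) < 1 / p₁ := by positivity
          linarith
      · exact absurd h' (ENNReal.inv_ne_zero.2 hx.2.ne)
    have hTg : (fun x => (g x * v₁ x) ^ p₁) =ᵐ[volume.restrict (Ioi (0:ℝ))] h := by
      filter_upwards [hv₁.2] with x hx
      simp only [hgdef]
      rw [mul_assoc, ENNReal.inv_mul_cancel hx.1.ne' hx.2.ne, mul_one,
        ← ENNReal.rpow_mul, one_div_mul_cancel hp₁.ne', ENNReal.rpow_one]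
    have hXcong := copsonNorm_congr_aux 1 (ENNReal.ofReal (q₁ / p₁))
      (fun x => u₁ x ^ p₁) (fun _ => 1) hTg
    have hFTg : (fun x => f x ^ p₁ * (g x * v₁ x) ^ p₁)
        =ᵐ[volume.restrict (Ioi (0:ℝ))] (fun x => f x ^ p₁ * h x) :=
      hTg.mono fun x hx => by simp only at hx ⊢; rw [hx]
    have hYcong := cesaroNorm_congr_aux (ENNReal.ofReal (p₂ / p₁)) (ENNReal.ofReal (q₂ / p₁))
      (fun x => u₂ x ^ p₁) (fun x => v₁ x ^ (-p₁) * v₂ x ^ p₁) hFTg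
    have e1 : cesaroNorm (ENNReal.ofReal p₂) (ENNReal.ofReal q₂) u₂ v₂ (fun x => f x * g x) /
        copsonNorm (ENNReal.ofReal p₁) (ENNReal.ofReal q₁) u₁ v₁ g
        = (cesaroNorm (ENNReal.ofReal (p₂ / p₁)) (ENNReal.ofReal (q₂ / p₁))
            (fun x => u₂ x ^ p₁) (fun x => v₁ x ^ (-p₁) * v₂ x ^ p₁)
            (fun x => f x ^ p₁ * h x) /
          copsonNorm 1 (ENNReal.ofReal (q₁ / p₁)) (fun x => u₁ x ^ p₁) (fun _ => 1)
            h) ^ (1 / p₁) := by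
      rw [hterm g, hYcong, hXcong]
    calc cesaroNorm (ENNReal.ofReal (p₂ / p₁)) (ENNReal.ofReal (q₂ / p₁))
            (fun x => u₂ x ^ p₁) (fun x => v₁ x ^ (-p₁) * v₂ x ^ p₁)
            (fun x => (fun x => f x ^ p₁) x * h x) /
          copsonNorm 1 (ENNReal.ofReal (q₁ / p₁)) (fun x => u₁ x ^ p₁) (fun _ => 1) h
        = (cesaroNorm (ENNReal.ofReal p₂) (ENNReal.ofReal q₂) u₂ v₂ (fun x => f x * g x) /
            copsonNorm (ENNReal.ofReal p₁) (ENNReal.ofReal q₁) u₁ v₁ g) ^ p₁ := by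
          rw [e1, ← ENNReal.rpow_mul, one_div_mul_cancel hp₁.ne', ENNReal.rpow_one]
      _ ≤ _ := ENNReal.rpow_le_rpow (le_iSup₂_of_le g ⟨hgm, hgne⟩ le_rfl) hp₁.le
end
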